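/- arXiv:1406.4428 — 6 statements merged into one kernel-verified Lean document; each statement's English description precedes it below -/
import Mathlib

section
/- Let n ≥ 1 and let θ₀,…,θ_{2n+1} ∈ 𝕋ⁿ be points such that for each i ∈ {1,…,n} the circle coordinates θ₀ⁱ, θ₁ⁱ, …, θ_{2n+1}ⁱ are pairwise distinct. Then Σ_{j=0}^{2n+1} (−1)^j C(θ₀, …, θ̂_j, …, θ_{2n+1}) = 0, where θ̂_j means that the argument θ_j is omitted; that is, C is closed as a combinatorial cochain. -/
open MeasureTheory Real
open scoped Real

noncomputable section

instance : Fact (0 < 2 * π) := ⟨by positivity⟩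

/-- The circle `S¹ = ℝ/2πℤ`. -/
abbrev Circle2pi := AddCircle (2 * π)

/-- The orientation cocycle `e` on the circle: `1` on strictly positively
cyclically ordered triples, `-1` otherwise. -/
def eCocycle (a b c : Circle2pi) : ℝ :=
  letI := Classical.dec (sbtw a b c)
  if sbtw a b c then 1 else -1

/-- The normalized Haar probability measure on the circle. -/
abbrev circleMeasure : Measure Circle2pi := AddCircle.haarAddCircle

/-- The `n`-torus `𝕋ⁿ`. -/
abbrev Torus (n : ℕ) := Fin n → Circle2pi

/-- The product probability measure on the `n`-torus. -/
abbrev torusMeasure (n : ℕ) : Measure (Torus n) := Measure.pi fun _ => circleMeasure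

/-- The cocycle `C` on `(𝕋ⁿ)^(2n+1)` (indices `0, …, 2n`; the `i`-th Euler class,
for `i = 0, …, n-1` (0-indexed), uses positions `2i, 2i+1, 2i+2`). -/
def Ccocycle (n : ℕ) (θ : Fin (2 * n + 1) → Torus n) : ℝ :=
  (1 / (2 * n + 1).factorial : ℝ) *
    ∑ σ : Equiv.Perm (Fin (2 * n + 1)), ((Equiv.Perm.sign σ : ℤ) : ℝ) *
      ∏ i : Fin n,
        eCocycle (θ (σ ⟨2 * i.1, by have := i.2; omega⟩) i)
          (θ (σ ⟨2 * i.1 + 1, by have := i.2; omega⟩) i)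
          (θ (σ ⟨2 * i.1 + 2, by have := i.2; omega⟩) i)

/-! ### Auxiliary: circular order facts -/

section CircHelpers
variable {α : Type*} [CircularOrder α]

theorem sbtw_chain {a b c d : α} (h1 : sbtw a b c) (h2 : sbtw a c d) : sbtw b c d :=
  ((h2.cyclic_right).trans_left h1).cyclic_left

theorem sbtw_of_not_sbtw {a b c : α} (hab : a ≠ b) (hbc : b ≠ c) (hac : a ≠ c)
    (h : ¬ sbtw a b c) : sbtw a c b := by
  have hb : btw c b a := by
    by_contra hb
    exact h (sbtw_iff_not_btw.mpr hb)
  have : ¬ btw a b c := fun h' => by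
    rcases btw_antisymm hb h' with h | h | h
    · exact hbc h.symm
    · exact hab h.symm
    · exact hac h
  exact ((hb.sbtw_of_not_btw this).cyclic_left).cyclic_left

theorem sbtw_total {a b c : α} (hab : a ≠ b) (hbc : b ≠ c) (hac : a ≠ c) :
    sbtw a b c ∨ sbtw a c b := by
  by_cases h : sbtw a b c
  · exact Or.inl h
  · exact Or.inr (sbtw_of_not_sbtw hab hbc hac h)

theorem four_point_cocycle (ev : α → α → α → ℝ)
    (hpos : ∀ x y z : α, sbtw x y z → ev x y z = 1)
    (hneg : ∀ x y z : α, ¬ sbtw x y z → ev x y z = -1)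
    {a b c d : α} (hab : a ≠ b) (hac : a ≠ c) (had : a ≠ d)
    (hbc : b ≠ c) (hbd : b ≠ d) (hcd : c ≠ d) :
    ev b c d - ev a c d + ev a b d - ev a b c = 0 := by
  rcases sbtw_total hab hbc hac with h4 | h4 <;>
    rcases sbtw_total hac hcd had with h2 | h2 <;>
      rcases sbtw_total hab hbd had with h3 | h3
  · rw [hpos _ _ _ (sbtw_chain h4 h2), hpos _ _ _ h2, hpos _ _ _ h3, hpos _ _ _ h4]; ring
  · exact absurd h3 (fun h3' => (sbtw_asymm (h4.trans_right h2)) h3'.cyclic_left)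
  · rw [hneg _ _ _ (sbtw_asymm (sbtw_chain h3 h2).cyclic_left),
      hneg _ _ _ (sbtw_asymm h2.cyclic_left), hpos _ _ _ h3, hpos _ _ _ h4]; ring
  · rw [hpos _ _ _ (sbtw_chain h3 h4).cyclic_left,
      hneg _ _ _ (sbtw_asymm h2.cyclic_left),
      hneg _ _ _ (sbtw_asymm h3.cyclic_left), hpos _ _ _ h4]; ring
  · rw [hneg _ _ _ (sbtw_asymm (sbtw_chain h4 h3).cyclic_right),
      hpos _ _ _ h2, hpos _ _ _ h3, hneg _ _ _ (sbtw_asymm h4.cyclic_left)]; ring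
  · rw [hpos _ _ _ (sbtw_chain h2 h3).cyclic_right, hpos _ _ _ h2,
      hneg _ _ _ (sbtw_asymm h3.cyclic_left), hneg _ _ _ (sbtw_asymm h4.cyclic_left)]; ring
  · exact absurd h3 (fun h3' => (sbtw_asymm (h2.trans_right h4)) h3'.cyclic_left)
  · rw [hneg _ _ _ (sbtw_asymm (sbtw_chain h2 h4)),
      hneg _ _ _ (sbtw_asymm h2.cyclic_left),
      hneg _ _ _ (sbtw_asymm h3.cyclic_left), hneg _ _ _ (sbtw_asymm h4.cyclic_left)]; ring

end CircHelpers

theorem eCocycle_pos {a b c : Circle2pi} (h : sbtw a b c) : eCocycle a b c = 1 := by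
  simp [eCocycle, h]

theorem eCocycle_neg {a b c : Circle2pi} (h : ¬ sbtw a b c) : eCocycle a b c = -1 := by
  simp [eCocycle, h]

/-! ### Auxiliary: the key combinatorial sum -/

def dmap (j k : ℕ) : ℕ := if k < j then k else k + 1

theorem dmap_shift (j k : ℕ) : dmap (j + 2) (k + 2) = dmap j k + 2 := by
  unfold dmap; split_ifs <;> omega

theorem dmap_lt {j k : ℕ} (h : k < j) : dmap j k = k := if_pos h

theorem dmap_ge {j k : ℕ} (h : j ≤ k) : dmap j k = k + 1 := if_neg (by omega)

theorem dmap_le (j k : ℕ) : dmap j k ≤ k + 1 := by unfold dmap; split_ifs <;> omega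

theorem key_sum (n : ℕ) (E : ℕ → ℕ → ℕ → ℕ → ℝ)
    (hc : ∀ i w x y z, i < n → z < 2 * n + 2 → w < x → x < y → y < z →
      E i x y z - E i w y z + E i w x z - E i w x y = 0) :
    ∑ j ∈ Finset.range (2 * n + 2), (-1 : ℝ) ^ j *
      ∏ i ∈ Finset.range n, E i (dmap j (2 * i)) (dmap j (2 * i + 1)) (dmap j (2 * i + 2)) = 0 := by
  induction n generalizing E with
  | zero => norm_num [Finset.sum_range_succ]
  | succ n ih =>
    have hsplit : ∀ j, ∏ i ∈ Finset.range (n + 1),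
        E i (dmap j (2 * i)) (dmap j (2 * i + 1)) (dmap j (2 * i + 2))
        = (∏ i ∈ Finset.range n,
            E (i + 1) (dmap j (2 * i + 2)) (dmap j (2 * i + 3)) (dmap j (2 * i + 4)))
          * E 0 (dmap j 0) (dmap j 1) (dmap j 2) := by
      intro j
      rw [Finset.prod_range_succ']
      congr 1
    simp only [hsplit]
    have e4 : 2 * (n + 1) + 2 = (2 * n + 1) + 1 + 1 + 1 := by ring
    rw [e4, Finset.sum_range_succ', Finset.sum_range_succ', Finset.sum_range_succ']
    set P0 : ℝ := ∏ i ∈ Finset.range n, E (i + 1) (2 * i + 3) (2 * i + 4) (2 * i + 5) with hP0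
    have hIH := ih (fun i x y z => E (i + 1) (x + 2) (y + 2) (z + 2))
      (fun i w x y z hi hz hwx hxy hyz =>
        hc (i + 1) (w + 2) (x + 2) (y + 2) (z + 2) (by omega) (by omega)
          (by omega) (by omega) (by omega))
    rw [Finset.sum_range_succ'] at hIH
    have hP0' : (∏ i ∈ Finset.range n, E (i + 1) (dmap 0 (2 * i) + 2)
        (dmap 0 (2 * i + 1) + 2) (dmap 0 (2 * i + 2) + 2)) = P0 := by
      apply Finset.prod_congr rfl
      intro i _
      rw [dmap_ge (by omega), dmap_ge (by omega), dmap_ge (by omega)]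
    rw [hP0'] at hIH
    have htail : ∑ j ∈ Finset.range (2 * n + 1), (-1 : ℝ) ^ (j + 1 + 1 + 1) *
        ((∏ i ∈ Finset.range n, E (i + 1) (dmap (j + 1 + 1 + 1) (2 * i + 2))
            (dmap (j + 1 + 1 + 1) (2 * i + 3)) (dmap (j + 1 + 1 + 1) (2 * i + 4)))
          * E 0 (dmap (j + 1 + 1 + 1) 0) (dmap (j + 1 + 1 + 1) 1) (dmap (j + 1 + 1 + 1) 2))
        = -(E 0 0 1 2 * P0) := by
      have step : ∀ j ∈ Finset.range (2 * n + 1), (-1 : ℝ) ^ (j + 1 + 1 + 1) *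
          ((∏ i ∈ Finset.range n, E (i + 1) (dmap (j + 1 + 1 + 1) (2 * i + 2))
            (dmap (j + 1 + 1 + 1) (2 * i + 3)) (dmap (j + 1 + 1 + 1) (2 * i + 4)))
            * E 0 (dmap (j + 1 + 1 + 1) 0) (dmap (j + 1 + 1 + 1) 1) (dmap (j + 1 + 1 + 1) 2))
          = ((-1 : ℝ) ^ (j + 1) *
              (∏ i ∈ Finset.range n, E (i + 1) (dmap (j + 1) (2 * i) + 2)
                (dmap (j + 1) (2 * i + 1) + 2) (dmap (j + 1) (2 * i + 2) + 2))) * E 0 0 1 2 := by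
        intro j _
        have hterm : (∏ i ∈ Finset.range n, E (i + 1) (dmap (j + 1 + 1 + 1) (2 * i + 2))
              (dmap (j + 1 + 1 + 1) (2 * i + 3)) (dmap (j + 1 + 1 + 1) (2 * i + 4)))
            = ∏ i ∈ Finset.range n, E (i + 1) (dmap (j + 1) (2 * i) + 2)
                (dmap (j + 1) (2 * i + 1) + 2) (dmap (j + 1) (2 * i + 2) + 2) := by
          apply Finset.prod_congr rfl
          intro i _
          have h1 : 2 * i + 2 = (2 * i) + 2 := by ring
          have h2 : 2 * i + 3 = (2 * i + 1) + 2 := by ring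
          have h3 : 2 * i + 4 = (2 * i + 2) + 2 := by ring
          have h4 : j + 1 + 1 + 1 = (j + 1) + 2 := by ring
          rw [h1, h2, h3, h4, dmap_shift, dmap_shift, dmap_shift]
        rw [hterm, dmap_lt (by omega), dmap_lt (by omega), dmap_lt (by omega)]
        have : (-1 : ℝ) ^ (j + 1 + 1 + 1) = (-1 : ℝ) ^ (j + 1) := by
          rw [pow_succ, pow_succ]; ring
        rw [this]; ring
      rw [Finset.sum_congr rfl step, ← Finset.sum_mul]
      have hz : ∑ j ∈ Finset.range (2 * n + 1), (-1 : ℝ) ^ (j + 1) *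
          (∏ i ∈ Finset.range n, E (i + 1) (dmap (j + 1) (2 * i) + 2)
            (dmap (j + 1) (2 * i + 1) + 2) (dmap (j + 1) (2 * i + 2) + 2)) = -P0 := by
        linarith [hIH]
      rw [hz]; ring
    rw [htail]
    have j0 : (∏ i ∈ Finset.range n, E (i + 1) (dmap 0 (2 * i + 2)) (dmap 0 (2 * i + 3))
        (dmap 0 (2 * i + 4))) = P0 := by
      apply Finset.prod_congr rfl; intro i _
      rw [dmap_ge (by omega), dmap_ge (by omega), dmap_ge (by omega)]
    have j1 : (∏ i ∈ Finset.range n, E (i + 1) (dmap 1 (2 * i + 2)) (dmap 1 (2 * i + 3))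
        (dmap 1 (2 * i + 4))) = P0 := by
      apply Finset.prod_congr rfl; intro i _
      rw [dmap_ge (by omega), dmap_ge (by omega), dmap_ge (by omega)]
    have j2 : (∏ i ∈ Finset.range n, E (i + 1) (dmap 2 (2 * i + 2)) (dmap 2 (2 * i + 3))
        (dmap 2 (2 * i + 4))) = P0 := by
      apply Finset.prod_congr rfl; intro i _
      rw [dmap_ge (by omega), dmap_ge (by omega), dmap_ge (by omega)]
    rw [j0, j1, j2]
    have hcoc := hc 0 0 1 2 3 (by omega) (by omega) (by omega) (by omega) (by omega)
    simp only [dmap]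
    norm_num
    linear_combination P0 * hcoc

/-! ### The product cochain -/

def fP (n : ℕ) (φ : Fin (2 * n + 1) → Torus n) : ℝ :=
  ∏ i : Fin n,
    eCocycle (φ ⟨2 * i.1, by have := i.2; omega⟩ i)
      (φ ⟨2 * i.1 + 1, by have := i.2; omega⟩ i)
      (φ ⟨2 * i.1 + 2, by have := i.2; omega⟩ i)

theorem succAbove_val {N : ℕ} (j : Fin (N + 1)) (k : Fin N) :
    ((j.succAbove k : Fin (N + 1)) : ℕ) = dmap j.1 k.1 := by
  rcases Nat.lt_or_ge k.1 j.1 with h | h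
  · rw [Fin.succAbove_of_castSucc_lt _ _ (by simpa [Fin.lt_iff_val_lt_val] using h),
      dmap_lt h]
    rfl
  · rw [Fin.succAbove_of_le_castSucc _ _ (by simpa [Fin.le_iff_val_le_val] using h),
      dmap_ge h]
    rfl

theorem cochain (n : ℕ) (hn : 1 ≤ n) (ψ : Fin (2 * n + 1 + 1) → Torus n)
    (hdist : ∀ i : Fin n, Function.Injective fun j => ψ j i) :
    ∑ j : Fin (2 * n + 1 + 1), (-1 : ℝ) ^ (j : ℕ) * fP n (fun k => ψ (j.succAbove k)) = 0 := by
  have hN : 0 < 2 * n + 2 := by omega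
  have hn0 : 0 < n := hn
  set E : ℕ → ℕ → ℕ → ℕ → ℝ := fun i x y z =>
    eCocycle (ψ ⟨x % (2 * n + 2), Nat.mod_lt _ hN⟩ ⟨i % n, Nat.mod_lt _ hn0⟩)
      (ψ ⟨y % (2 * n + 2), Nat.mod_lt _ hN⟩ ⟨i % n, Nat.mod_lt _ hn0⟩)
      (ψ ⟨z % (2 * n + 2), Nat.mod_lt _ hN⟩ ⟨i % n, Nat.mod_lt _ hn0⟩) with hE
  have hc : ∀ i w x y z, i < n → z < 2 * n + 2 → w < x → x < y → y < z →
      E i x y z - E i w y z + E i w x z - E i w x y = 0 := by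
    intro i w x y z hi hz hwx hxy hyz
    have hw : w % (2 * n + 2) = w := Nat.mod_eq_of_lt (by omega)
    have hx : x % (2 * n + 2) = x := Nat.mod_eq_of_lt (by omega)
    have hy : y % (2 * n + 2) = y := Nat.mod_eq_of_lt (by omega)
    have hz' : z % (2 * n + 2) = z := Nat.mod_eq_of_lt (by omega)
    have hi' : i % n = i := Nat.mod_eq_of_lt hi
    simp only [hE, hw, hx, hy, hz', hi']
    set C : Fin n := ⟨i, hi⟩
    have hne : ∀ u v : ℕ, (hu : u < 2 * n + 2) → (hv : v < 2 * n + 2) → u ≠ v →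
        ψ ⟨u, hu⟩ C ≠ ψ ⟨v, hv⟩ C := by
      intro u v hu hv huv h
      exact huv (by simpa [Fin.mk.injEq] using (hdist C) h)
    exact four_point_cocycle eCocycle (fun x y z h => eCocycle_pos h)
      (fun x y z h => eCocycle_neg h)
      (hne _ _ (by omega) (by omega) (by omega)) (hne _ _ (by omega) (by omega) (by omega))
      (hne _ _ (by omega) (by omega) (by omega)) (hne _ _ (by omega) (by omega) (by omega))
      (hne _ _ (by omega) (by omega) (by omega)) (hne _ _ (by omega) (by omega) (by omega))
  have hmain := key_sum n E hc
  rw [← hmain]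
  rw [← Fin.sum_univ_eq_sum_range (fun j => (-1 : ℝ) ^ j *
    ∏ i ∈ Finset.range n, E i (dmap j (2 * i)) (dmap j (2 * i + 1)) (dmap j (2 * i + 2)))
    (2 * n + 2)]
  apply Finset.sum_congr rfl
  intro j _
  congr 1
  rw [fP, ← Fin.prod_univ_eq_prod_range (fun i =>
    E i (dmap j.1 (2 * i)) (dmap j.1 (2 * i + 1)) (dmap j.1 (2 * i + 2))) n]
  apply Finset.prod_congr rfl
  intro i _
  simp only [hE]
  have harg : ∀ (k : ℕ) (hk : k < 2 * n + 1),
      ψ (j.succAbove ⟨k, hk⟩) = ψ ⟨dmap j.1 k % (2 * n + 2), Nat.mod_lt _ hN⟩ := by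
    intro k hk
    have heq : j.succAbove ⟨k, hk⟩ = (⟨dmap j.1 k % (2 * n + 2), Nat.mod_lt _ hN⟩ :
        Fin (2 * n + 1 + 1)) := by
      apply Fin.ext
      rw [succAbove_val]
      simp only [Fin.val_mk]
      exact (Nat.mod_eq_of_lt (by have := dmap_le j.1 k; omega)).symm
    rw [heq]
  have hC : (⟨i.1 % n, Nat.mod_lt _ hn0⟩ : Fin n) = i :=
    Fin.ext (Nat.mod_eq_of_lt i.2)
  rw [harg (2 * i.1) (by have := i.2; omega), harg (2 * i.1 + 1) (by have := i.2; omega),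
    harg (2 * i.1 + 2) (by have := i.2; omega), hC]

/-! ### Permutation reindexing -/

def sgnR {β : Type*} [DecidableEq β] [Fintype β] (τ : Equiv.Perm β) : ℝ :=
  ((Equiv.Perm.sign τ : ℤ) : ℝ)

theorem sgnR_mul {β : Type*} [DecidableEq β] [Fintype β] (a b : Equiv.Perm β) :
    sgnR (a * b) = sgnR a * sgnR b := by
  simp [sgnR]

def Bmap (m : ℕ) : Fin (m + 1) × Equiv.Perm (Fin m) → Equiv.Perm (Fin (m + 1)) :=
  fun p => (Fin.cycleRange p.1).symm * Equiv.Perm.decomposeFin.symm (0, p.2)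

theorem Bmap_succ (m : ℕ) (p : Fin (m + 1) × Equiv.Perm (Fin m)) (k : Fin m) :
    Bmap m p (Fin.succ k) = p.1.succAbove (p.2 k) := by
  simp [Bmap, Equiv.Perm.mul_apply, Equiv.Perm.decomposeFin_symm_apply_succ,
    Equiv.swap_self, Fin.cycleRange_symm_succ]

theorem Bmap_zero (m : ℕ) (p : Fin (m + 1) × Equiv.Perm (Fin m)) :
    Bmap m p 0 = p.1 := by
  simp [Bmap, Equiv.Perm.mul_apply, Equiv.Perm.decomposeFin_symm_apply_zero,
    Fin.cycleRange_symm_zero]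

theorem Bmap_sign (m : ℕ) (p : Fin (m + 1) × Equiv.Perm (Fin m)) :
    sgnR (Bmap m p) = (-1 : ℝ) ^ (p.1 : ℕ) * sgnR p.2 := by
  rw [Bmap, sgnR_mul]
  congr 1
  · simp [sgnR, Equiv.Perm.sign_symm, Fin.sign_cycleRange]
  · simp [sgnR, Equiv.Perm.decomposeFin.symm_sign]

theorem Bmap_bijective (m : ℕ) : Function.Bijective (Bmap m) := by
  rw [Fintype.bijective_iff_injective_and_card]
  constructor
  · intro p q h
    have h1 : p.1 = q.1 := by
      have := congrArg (fun τ => τ 0) h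
      simpa [Bmap_zero] using this
    have h2 : Equiv.Perm.decomposeFin.symm (0, p.2) = Equiv.Perm.decomposeFin.symm (0, q.2) := by
      have hBp : Bmap m p = (Fin.cycleRange p.1).symm * Equiv.Perm.decomposeFin.symm (0, p.2) :=
        rfl
      have hBq : Bmap m q = (Fin.cycleRange q.1).symm * Equiv.Perm.decomposeFin.symm (0, q.2) :=
        rfl
      rw [hBp, hBq, h1] at h
      exact mul_left_cancel h
    have h4 : p.2 = q.2 := by
      have h3 := Equiv.Perm.decomposeFin.symm.injective h2
      simpa using h3
    exact Prod.ext h1 h4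
  · simp [Fintype.card_prod, Fintype.card_perm, Fintype.card_fin, Nat.factorial_succ]

/-- `C` is closed as a combinatorial cochain, on tuples whose
coordinates are pairwise distinct in each circle factor. -/
theorem Ccocycle_closed (n : ℕ) (hn : 1 ≤ n) (θ : Fin (2 * n + 1 + 1) → Torus n)
    (hdist : ∀ i : Fin n, Function.Injective fun j => θ j i) :
    ∑ j : Fin (2 * n + 1 + 1),
      (-1 : ℝ) ^ (j : ℕ) * Ccocycle n (fun k => θ (j.succAbove k)) = 0 := by
  classical
  have hkey : ∀ τ : Equiv.Perm (Fin (2 * n + 1 + 1)),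
      ∑ j : Fin (2 * n + 1 + 1), (-1 : ℝ) ^ (j : ℕ) *
        fP n (fun k => θ (τ (j.succAbove k))) = 0 := by
    intro τ
    exact cochain n hn (fun j => θ (τ j)) (fun i => (hdist i).comp τ.injective)
  set X : ℝ := ∑ τ : Equiv.Perm (Fin (2 * n + 1 + 1)),
    sgnR τ * fP n (fun k => θ (τ k.succ)) with hX
  -- Lemma A
  have hA : ∑ j : Fin (2 * n + 1 + 1), ∑ σ : Equiv.Perm (Fin (2 * n + 1)),
      ((-1 : ℝ) ^ (j : ℕ) * sgnR σ) * fP n (fun k => θ (j.succAbove (σ k))) = X := by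
    rw [← Fintype.sum_prod_type' (f := fun (j : Fin (2 * n + 1 + 1))
      (σ : Equiv.Perm (Fin (2 * n + 1))) =>
      ((-1 : ℝ) ^ (j : ℕ) * sgnR σ) * fP n (fun k => θ (j.succAbove (σ k))))]
    rw [hX]
    refine Fintype.sum_bijective (Bmap (2 * n + 1)) (Bmap_bijective (2 * n + 1)) _ _ ?_
    intro p
    rw [Bmap_sign]
    congr 1
    apply congrArg
    funext k
    rw [Bmap_succ]
  -- Lemma B
  have hBj : ∀ j0 : Fin (2 * n + 1 + 1),
      ∑ τ : Equiv.Perm (Fin (2 * n + 1 + 1)), sgnR τ *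
        fP n (fun k => θ (τ (j0.succAbove k))) = (-1 : ℝ) ^ (j0 : ℕ) * X := by
    intro j0
    rw [← Equiv.sum_comp (Equiv.mulRight (Fin.cycleRange j0))
      (fun τ => sgnR τ * fP n (fun k => θ (τ (j0.succAbove k))))]
    rw [hX, Finset.mul_sum]
    apply Finset.sum_congr rfl
    intro τ _
    simp only [Equiv.coe_mulRight]
    rw [sgnR_mul]
    have h1 : sgnR (Fin.cycleRange j0) = (-1 : ℝ) ^ (j0 : ℕ) := by
      simp [sgnR, Fin.sign_cycleRange]
    have h2 : ∀ k, (τ * Fin.cycleRange j0) (j0.succAbove k) = τ k.succ := by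
      intro k
      rw [Equiv.Perm.mul_apply, Fin.cycleRange_succAbove]
    have h3 : fP n (fun k => θ ((τ * Fin.cycleRange j0) (j0.succAbove k)))
        = fP n (fun k => θ (τ k.succ)) := by
      apply congrArg
      funext k
      rw [h2]
    rw [h3, h1]
    ring
  -- X = 0
  have hNX : (2 * n + 1 + 1 : ℝ) * X = 0 := by
    have hswap : ∑ j0 : Fin (2 * n + 1 + 1), (-1 : ℝ) ^ (j0 : ℕ) *
        (∑ τ : Equiv.Perm (Fin (2 * n + 1 + 1)), sgnR τ *
          fP n (fun k => θ (τ (j0.succAbove k)))) = 0 := by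
      have : ∀ j0 : Fin (2 * n + 1 + 1), (-1 : ℝ) ^ (j0 : ℕ) *
          (∑ τ : Equiv.Perm (Fin (2 * n + 1 + 1)), sgnR τ *
            fP n (fun k => θ (τ (j0.succAbove k))))
          = ∑ τ : Equiv.Perm (Fin (2 * n + 1 + 1)), sgnR τ *
            ((-1 : ℝ) ^ (j0 : ℕ) * fP n (fun k => θ (τ (j0.succAbove k)))) := by
        intro j0
        rw [Finset.mul_sum]
        apply Finset.sum_congr rfl
        intro τ _
        ring
      rw [Finset.sum_congr rfl (fun j0 _ => this j0), Finset.sum_comm]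
      rw [Finset.sum_congr rfl (fun τ _ => (Finset.mul_sum _ _ _).symm)]
      rw [Finset.sum_congr rfl (fun τ _ => by rw [hkey τ, mul_zero])]
      exact Finset.sum_const_zero
    have hswap2 : ∑ j0 : Fin (2 * n + 1 + 1), (-1 : ℝ) ^ (j0 : ℕ) *
        (∑ τ : Equiv.Perm (Fin (2 * n + 1 + 1)), sgnR τ *
          fP n (fun k => θ (τ (j0.succAbove k))))
        = (2 * n + 1 + 1 : ℝ) * X := by
      rw [Finset.sum_congr rfl (fun j0 _ => by rw [hBj j0])]
      have : ∀ j0 : Fin (2 * n + 1 + 1), (-1 : ℝ) ^ (j0 : ℕ) *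
          ((-1 : ℝ) ^ (j0 : ℕ) * X) = X := by
        intro j0
        rw [← mul_assoc, ← mul_pow]
        norm_num
      rw [Finset.sum_congr rfl (fun j0 _ => this j0), Finset.sum_const, Finset.card_univ,
        Fintype.card_fin, nsmul_eq_mul]
      push_cast
      ring
    rw [← hswap2, hswap]
  have hX0 : X = 0 := by
    have : (2 * n + 1 + 1 : ℝ) ≠ 0 := by positivity
    exact (mul_eq_zero.mp hNX).resolve_left this
  -- Final assembly
  have hCc : ∀ j : Fin (2 * n + 1 + 1), Ccocycle n (fun k => θ (j.succAbove k))
      = (1 / (2 * n + 1).factorial : ℝ) * ∑ σ : Equiv.Perm (Fin (2 * n + 1)),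
        sgnR σ * fP n (fun k => θ (j.succAbove (σ k))) := by
    intro j
    rfl
  have expand : ∀ j : Fin (2 * n + 1 + 1), (-1 : ℝ) ^ (j : ℕ) *
      Ccocycle n (fun k => θ (j.succAbove k))
      = (1 / (2 * n + 1).factorial : ℝ) * ∑ σ : Equiv.Perm (Fin (2 * n + 1)),
          ((-1 : ℝ) ^ (j : ℕ) * sgnR σ) * fP n (fun k => θ (j.succAbove (σ k))) := by
    intro j
    rw [hCc j]
    simp only [Finset.mul_sum]
    apply Finset.sum_congr rfl
    intro σ _
    ring
  rw [Finset.sum_congr rfl (fun j _ => expand j), ← Finset.mul_sum, hA, hX0, mul_zero]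
end
end

section
/- Let n ≥ 1 and let a₀, a₁, …, a_{2n} : 𝕋ⁿ → ℝ be integrable functions each of integral zero, i.e. ∫_{𝕋ⁿ} a_j dθ = 0 for j = 0,…,2n. Then ∫_{(𝕋ⁿ)^{2n+1}} C(θ₀,…,θ_{2n}) a₀(θ₀) a₁(θ₁) ⋯ a_{2n}(θ_{2n}) dθ₀⋯dθ_{2n} = 0. -/
open MeasureTheory Real
open scoped Real

noncomputable section

/-! ### Auxiliary material -/

section Aux

/-- The representative of a point of the circle in `[0, 2π)`. -/
def crep (z : Circle2pi) : ℝ :=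
  (QuotientAddGroup.equivIcoMod Real.two_pi_pos 0 z : ℝ)

lemma crep_mem (z : Circle2pi) : crep z ∈ Set.Ico (0:ℝ) (2*π) := by
  have h := (QuotientAddGroup.equivIcoMod Real.two_pi_pos 0 z).2
  simpa [crep] using h

lemma coe_crep (z : Circle2pi) : ((crep z : ℝ) : Circle2pi) = z :=
  (QuotientAddGroup.equivIcoMod Real.two_pi_pos (0:ℝ)).symm_apply_apply z

lemma crep_coe {r : ℝ} (hr : r ∈ Set.Ico (0:ℝ) (2*π)) : crep (r : Circle2pi) = r := by
  rw [crep, QuotientAddGroup.equivIcoMod_coe]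
  exact (toIcoMod_eq_self Real.two_pi_pos).2 (by simpa using hr)

lemma crep_zero : crep (0 : Circle2pi) = 0 := by
  have : ((0:ℝ) : Circle2pi) = 0 := by norm_cast
  rw [← this, crep_coe ⟨le_refl _, by positivity⟩]

lemma crep_eq_zero_iff {z : Circle2pi} : crep z = 0 ↔ z = 0 := by
  constructor
  · intro h
    have := coe_crep z
    rw [h] at this
    simpa using this.symm
  · rintro rfl; exact crep_zero

lemma crep_pos {z : Circle2pi} (hz : z ≠ 0) : 0 < crep z :=
  lt_of_le_of_ne (crep_mem z).1 (fun h => hz (crep_eq_zero_iff.1 h.symm))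

lemma ioc_rep_eq {z : Circle2pi} (hz : z ≠ 0) :
    (QuotientAddGroup.equivIocMod Real.two_pi_pos 0 z : ℝ) = crep z := by
  induction z using QuotientAddGroup.induction_on with
  | H x =>
    rw [crep, QuotientAddGroup.equivIcoMod_coe, QuotientAddGroup.equivIocMod_coe]
    have hne : ¬ (0:ℝ) ≡ x [PMOD (2*π)] := by
      rw [AddCommGroup.modEq_iff_eq_mod_zmultiples]
      intro h
      exact hz (h.symm.trans (by norm_cast))
    exact ((AddCommGroup.not_modEq_iff_toIcoMod_eq_toIocMod Real.two_pi_pos).1 hne).symm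

lemma crep_neg {z : Circle2pi} (hz : z ≠ 0) : crep (-z) = 2*π - crep z := by
  have h2π : ((2*π : ℝ) : Circle2pi) = 0 := AddCircle.coe_period (p := 2*π) ▸ rfl
  have h1 : ((2*π - crep z : ℝ) : Circle2pi) = -z := by
    rw [AddCircle.coe_sub, h2π, coe_crep, zero_sub]
  have hmem : (2*π - crep z : ℝ) ∈ Set.Ico (0:ℝ) (2*π) := by
    have h0 := crep_pos hz
    have h2 := (crep_mem z).2
    constructor <;> [linarith; linarith]
  rw [← h1, crep_coe hmem]

/-- The primitive of the orientation cocycle. -/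
def gg (z : Circle2pi) : ℝ := crep z / π - 1

/-- Two-variable version of `gg`. -/
def ff (u v : Circle2pi) : ℝ := gg (v - u)

lemma btw_iff' (a b c : Circle2pi) :
    btw a b c ↔ crep (b-a) ≤ (QuotientAddGroup.equivIocMod Real.two_pi_pos 0 (c-a) : ℝ) :=
  Iff.rfl

/-- The key pointwise identity: away from the diagonals, the orientation cocycle is
the coboundary of `ff`. -/
lemma eCocycle_eq {a b c : Circle2pi} (hab : a ≠ b) (hbc : b ≠ c) (hac : a ≠ c) :
    eCocycle a b c = gg (c-a) - gg (b-a) - gg (c-b) := by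
  have hba : b - a ≠ 0 := sub_ne_zero.2 (Ne.symm hab)
  have hcb : c - b ≠ 0 := sub_ne_zero.2 (Ne.symm hbc)
  have hca : c - a ≠ 0 := sub_ne_zero.2 (Ne.symm hac)
  set u := crep (b-a) with hu_def
  set v := crep (c-b) with hv_def
  set w := crep (c-a) with hw_def
  have hu0 : 0 < u := crep_pos hba
  have hv0 : 0 < v := crep_pos hcb
  have hw0 : 0 < w := crep_pos hca
  have hu2 : u < 2*π := (crep_mem _).2
  have hv2 : v < 2*π := (crep_mem _).2
  have hw2 : w < 2*π := (crep_mem _).2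
  have hπ : (0:ℝ) < π := Real.pi_pos
  have hkey : w = u + v ∨ w = u + v - 2*π := by
    have hco : ((u + v - w : ℝ) : Circle2pi) = 0 := by
      rw [sub_eq_add_neg, AddCircle.coe_add, AddCircle.coe_add, AddCircle.coe_neg,
        coe_crep, coe_crep, coe_crep]
      abel
    rw [AddCircle.coe_eq_zero_iff] at hco
    obtain ⟨k, hk⟩ := hco
    have hkr : (k:ℝ) * (2*π) = u + v - w := by
      rw [← hk]; push_cast [zsmul_eq_mul]; ring
    have h1 : (-1:ℝ) < (k:ℝ) := by nlinarith
    have h2 : (k:ℝ) < 2 := by nlinarith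
    have hk01 : k = 0 ∨ k = 1 := by
      have h1' : (-1:ℤ) < k := by exact_mod_cast h1
      have h2' : k < 2 := by exact_mod_cast h2
      omega
    rcases hk01 with rfl | rfl
    · left; push_cast at hkr; linarith
    · right; push_cast at hkr; linarith
  have hbtw1 : btw a b c ↔ u ≤ w := by
    rw [btw_iff', ioc_rep_eq hca]
  have hbtw2 : btw c b a ↔ w ≤ v := by
    have h1 : b - c = -(c - b) := by abel
    have h2 : a - c = -(c - a) := by abel
    rw [btw_iff', ioc_rep_eq (by rw [h2]; exact neg_ne_zero.2 hca), h1, h2,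
      crep_neg hcb, crep_neg hca]
    constructor <;> intro h <;> linarith
  have hsbtw : sbtw a b c ↔ (u ≤ w ∧ ¬ w ≤ v) := by
    rw [sbtw_iff_btw_not_btw, hbtw1, hbtw2]
  rcases hkey with hw | hw
  · have hs : sbtw a b c := by
      rw [hsbtw]
      constructor
      · linarith
      · intro h; linarith
    rw [eCocycle, if_pos hs]
    rw [gg, gg, gg, ← hu_def, ← hv_def, ← hw_def, hw]
    field_simp
    try ring
  · have hs : ¬ sbtw a b c := by
      rw [hsbtw]
      rintro ⟨h, -⟩
      linarith
    rw [eCocycle, if_neg hs]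
    rw [gg, gg, gg, ← hu_def, ← hv_def, ← hw_def, hw]
    field_simp
    try ring

instance : Nontrivial Circle2pi := by
  refine ⟨(π : ℝ), 0, ?_⟩
  rw [Ne, AddCircle.coe_eq_zero_iff]
  rintro ⟨k, hk⟩
  have h1 : (k : ℝ) * (2 * π) = π := by simpa [zsmul_eq_mul] using hk
  have h2 : ((2 * k - 1 : ℤ) : ℝ) * π = 0 := by push_cast; nlinarith [Real.pi_ne_zero]
  rcases mul_eq_zero.1 h2 with h | h
  · have : (2 * k - 1 : ℤ) = 0 := by exact_mod_cast h
    omega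
  · exact Real.pi_ne_zero h

instance : NullSingletonClass (circleMeasure) := MeasureTheory.Measure.IsAddHaarMeasure.nullSingletonClass _

lemma measurable_crep : Measurable crep :=
  measurable_subtype_coe.comp (AddCircle.measurableEquivIco (2*π) 0).measurable

lemma measurable_gg : Measurable gg :=
  (measurable_crep.div_const π).sub measurable_const

lemma abs_gg_le (z : Circle2pi) : |gg z| ≤ 1 := by
  have h := crep_mem z
  have hπ : (0:ℝ) < π := Real.pi_pos
  rw [abs_le]
  constructor
  · have : 0 ≤ crep z / π := div_nonneg h.1 hπ.le
    simp only [gg]; linarith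
  · have : crep z / π < 2 := (div_lt_iff₀ hπ).2 (by linarith [h.2])
    simp only [gg]; linarith

lemma abs_ff_le (u v : Circle2pi) : |ff u v| ≤ 1 := abs_gg_le _

variable {n : ℕ}

lemma measurable_ff_pair {M : ℕ} (x y : Fin M) (i : Fin n) :
    Measurable (fun θ : Fin M → Torus n => ff (θ x i) (θ y i)) := by
  have h1 : Measurable (fun θ : Fin M → Torus n => θ x i) :=
    (measurable_pi_apply i).comp (measurable_pi_apply x)
  have h2 : Measurable (fun θ : Fin M → Torus n => θ y i) :=
    (measurable_pi_apply i).comp (measurable_pi_apply y)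
  exact measurable_gg.comp (h2.sub h1)

lemma evalHyper {M : ℕ} (j : Fin M) (i : Fin n) (c : Circle2pi) :
    (Measure.pi fun _ : Fin M => torusMeasure n) {y | y j i = c} = 0 := by
  classical
  have hsub : {y : Fin M → Torus n | y j i = c}
      = Set.pi Set.univ (fun k => if k = j then {z : Torus n | z i = c} else Set.univ) := by
    ext y
    simp only [Set.mem_pi, Set.mem_univ, true_implies, Set.mem_setOf_eq]
    constructor
    · intro h k
      by_cases hk : k = j
      · subst hk; simpa using h
      · simp [hk]
    · intro h
      have := h j
      simpa using this
  rw [hsub, Measure.pi_pi]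
  refine Finset.prod_eq_zero (Finset.mem_univ j) ?_
  simp only [if_pos rfl]
  exact Measure.pi_hyperplane (fun _ : Fin n => circleMeasure) i c

lemma coordNull {m : ℕ} (p q : Fin (m+1)) (hpq : p ≠ q) (i : Fin n) :
    (Measure.pi fun _ : Fin (m+1) => torusMeasure n) {θ | θ p i = θ q i} = 0 := by
  obtain ⟨q', hq'⟩ := Fin.exists_succAbove_eq (Ne.symm hpq)
  set e := MeasurableEquiv.piFinSuccAbove (fun _ : Fin (m+1) => Torus n) p with he
  have hmp := measurePreserving_piFinSuccAbove (fun _ : Fin (m+1) => torusMeasure n) p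
  set S : Set (Torus n × (Fin m → Torus n)) := {z | z.1 i = z.2 q' i} with hS
  have hSm : MeasurableSet S := by
    apply measurableSet_eq_fun
    · exact (measurable_pi_apply i).comp measurable_fst
    · exact (measurable_pi_apply i).comp ((measurable_pi_apply q').comp measurable_snd)
  have hpre : {θ : Fin (m+1) → Torus n | θ p i = θ q i} = e ⁻¹' S := by
    ext θ
    simp only [Set.mem_preimage, hS, Set.mem_setOf_eq, he,
      MeasurableEquiv.piFinSuccAbove_apply]
    rw [← hq']
    simp [Fin.removeNth]
  rw [hpre, hmp.measure_preimage hSm.nullMeasurableSet, Measure.prod_apply hSm]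
  have hz : ∀ x : Torus n, (Measure.pi fun _ : Fin m => torusMeasure n)
      (Prod.mk x ⁻¹' S) = 0 := by
    intro x
    have hxy : Prod.mk x ⁻¹' S = {y : Fin m → Torus n | y q' i = x i} := by
      ext y; simp [hS, eq_comm]
    rw [hxy]
    exact evalHyper q' i (x i)
  simp only [hz]
  simp

lemma integrable_prod_eval {M : ℕ} (f : Fin M → Torus n → ℝ)
    (hf : ∀ j, Integrable (f j) (torusMeasure n)) :
    Integrable (fun θ : Fin M → Torus n => ∏ j, f j (θ j))
      (Measure.pi fun _ => torusMeasure n) := by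
  induction M with
  | zero =>
      simp only [Finset.univ_eq_empty, Finset.prod_empty]
      exact integrable_const 1
  | succ m ih =>
      have hmp := ((measurePreserving_piFinSuccAbove
        (fun _ : Fin (m+1) => torusMeasure n) 0).symm)
      rw [← hmp.integrable_comp_emb (MeasurableEquiv.measurableEmbedding _)]
      simp_rw [MeasurableEquiv.piFinSuccAbove_symm_apply, Fin.insertNthEquiv,
        Fin.prod_univ_succ, Fin.insertNth_zero]
      simp only [Fin.zero_succAbove, Function.comp_def, Fin.cons_zero, Fin.cons_succ,
        Equiv.coe_fn_mk]
      exact Integrable.mul_prod (hf 0) (ih (fun j => f j.succ) (fun j => hf _))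

/-- If `G` does not depend on the `j₀`-th coordinate and `a j₀` has integral zero,
then the integral of `G θ * ∏ j, a j (θ j)` vanishes. -/
lemma pullout {m : ℕ} (a : Fin (m+1) → Torus n → ℝ) (j₀ : Fin (m+1))
    (hz : ∫ x, a j₀ x ∂(torusMeasure n) = 0)
    (G : (Fin (m+1) → Torus n) → ℝ)
    (hG : ∀ θ x, G (Function.update θ j₀ x) = G θ) :
    ∫ θ, G θ * ∏ j, a j (θ j) ∂(Measure.pi fun _ => torusMeasure n) = 0 := by
  have hmp := ((measurePreserving_piFinSuccAbove
    (fun _ : Fin (m+1) => torusMeasure n) j₀).symm)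
  rw [← hmp.integral_comp' (fun θ => G θ * ∏ j, a j (θ j))]
  have key : ∀ z : Torus n × (Fin m → Torus n),
      G ((MeasurableEquiv.piFinSuccAbove (fun _ : Fin (m+1) => Torus n) j₀).symm z)
        * ∏ j, a j (((MeasurableEquiv.piFinSuccAbove (fun _ : Fin (m+1) => Torus n) j₀).symm z) j)
      = a j₀ z.1 * ((G (j₀.insertNth 0 z.2))
          * ∏ j : Fin m, a (j₀.succAbove j) (z.2 j)) := by
    rintro ⟨x, y⟩
    have hsymm : (MeasurableEquiv.piFinSuccAbove (fun _ : Fin (m+1) => Torus n) j₀).symm (x, y)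
        = j₀.insertNth x y := by
      simp [MeasurableEquiv.piFinSuccAbove_symm_apply, Fin.insertNthEquiv]
    rw [hsymm]
    have hGx : G (j₀.insertNth x y) = G (j₀.insertNth 0 y) := by
      have h1 := Fin.update_insertNth (α := fun _ : Fin (m+1) => Torus n) j₀ (0:Torus n) x y
      rw [← h1, hG]
    have hprod : (∏ j, a j (j₀.insertNth (α := fun _ : Fin (m+1) => Torus n) x y j))
        = a j₀ x * ∏ j : Fin m, a (j₀.succAbove j) (y j) := by
      rw [Fin.prod_univ_succAbove
        (fun j => a j (j₀.insertNth (α := fun _ : Fin (m+1) => Torus n) x y j)) j₀]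
      simp [Fin.insertNth_apply_same, Fin.insertNth_apply_succAbove]
    rw [hGx, hprod]
    ring
  simp only [key]
  rw [integral_prod_mul (f := a j₀)
    (g := fun y => G (j₀.insertNth 0 y) * ∏ j : Fin m, a (j₀.succAbove j) (y j)), hz, zero_mul]

lemma pair_prod_zero {m : ℕ} (a : Fin (m+1) → Torus n → ℝ)
    (hza : ∀ j, ∫ x, a j x ∂(torusMeasure n) = 0)
    (X Y : Fin n → Fin (m+1)) (j₀ : Fin (m+1))
    (hX : ∀ i, X i ≠ j₀) (hY : ∀ i, Y i ≠ j₀)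
    (h : Fin n → Circle2pi → Circle2pi → ℝ) :
    ∫ θ : Fin (m+1) → Torus n, (∏ i, h i (θ (X i) i) (θ (Y i) i)) * ∏ j, a j (θ j)
      ∂(Measure.pi fun _ => torusMeasure n) = 0 := by
  apply pullout a j₀ (hza j₀)
  intro θ x
  apply Finset.prod_congr rfl
  intro i _
  rw [Function.update_of_ne (hX i), Function.update_of_ne (hY i)]

lemma Dterm_zero (a : Fin (2*n+1) → Torus n → ℝ)
    (hint : ∀ j, Integrable (a j) (torusMeasure n))
    (hza : ∀ j, ∫ x, a j x ∂(torusMeasure n) = 0)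
    (P0 P1 P2 : Fin n → Fin (2*n+1)) :
    ∫ θ : Fin (2*n+1) → Torus n,
      (∏ i, (ff (θ (P0 i) i) (θ (P2 i) i) - ff (θ (P0 i) i) (θ (P1 i) i)
              - ff (θ (P1 i) i) (θ (P2 i) i))) * ∏ j, a j (θ j)
      ∂(Measure.pi fun _ => torusMeasure n) = 0 := by
  classical
  set A : Fin n → Fin 3 → Fin (2*n+1) := fun i => ![P0 i, P0 i, P1 i] with hA
  set B : Fin n → Fin 3 → Fin (2*n+1) := fun i => ![P2 i, P1 i, P2 i] with hB
  set sg : Fin 3 → ℝ := ![1, -1, -1] with hsg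
  have hstep : ∀ θ : Fin (2*n+1) → Torus n, ∀ i : Fin n,
      ff (θ (P0 i) i) (θ (P2 i) i) - ff (θ (P0 i) i) (θ (P1 i) i)
        - ff (θ (P1 i) i) (θ (P2 i) i)
      = ∑ k : Fin 3, sg k * ff (θ (A i k) i) (θ (B i k) i) := by
    intro θ i
    rw [Fin.sum_univ_three]
    simp [hA, hB, hsg]
    ring
  have hexp : ∀ θ : Fin (2*n+1) → Torus n,
      (∏ i, (ff (θ (P0 i) i) (θ (P2 i) i) - ff (θ (P0 i) i) (θ (P1 i) i)
              - ff (θ (P1 i) i) (θ (P2 i) i))) * ∏ j, a j (θ j)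
      = ∑ K : Fin n → Fin 3,
          (∏ i, sg (K i) * ff (θ (A i (K i)) i) (θ (B i (K i)) i)) * ∏ j, a j (θ j) := by
    intro θ
    rw [← Finset.sum_mul]
    congr 1
    calc (∏ i, (ff (θ (P0 i) i) (θ (P2 i) i) - ff (θ (P0 i) i) (θ (P1 i) i)
              - ff (θ (P1 i) i) (θ (P2 i) i)))
        = ∏ i, ∑ k : Fin 3, sg k * ff (θ (A i k) i) (θ (B i k) i) :=
          Finset.prod_congr rfl (fun i _ => hstep θ i)
      _ = ∑ K ∈ Fintype.piFinset (fun _ : Fin n => (Finset.univ : Finset (Fin 3))),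
            ∏ i, sg (K i) * ff (θ (A i (K i)) i) (θ (B i (K i)) i) :=
          Finset.prod_univ_sum _ _
      _ = ∑ K : Fin n → Fin 3, ∏ i, sg (K i) * ff (θ (A i (K i)) i) (θ (B i (K i)) i) := by
          rw [Fintype.piFinset_univ]
  simp_rw [hexp]
  have hintK : ∀ K : Fin n → Fin 3,
      Integrable (fun θ : Fin (2*n+1) → Torus n =>
        (∏ i, sg (K i) * ff (θ (A i (K i)) i) (θ (B i (K i)) i)) * ∏ j, a j (θ j))
        (Measure.pi fun _ => torusMeasure n) := by
    intro K
    apply Integrable.bdd_mul (c := 1) (integrable_prod_eval a hint)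
    · apply Measurable.aestronglyMeasurable
      apply Finset.measurable_prod
      intro i _
      exact measurable_const.mul (measurable_ff_pair (A i (K i)) (B i (K i)) i)
    · refine Filter.Eventually.of_forall (fun θ => ?_)
      rw [Real.norm_eq_abs, Finset.abs_prod]
      apply Finset.prod_le_one (fun i _ => abs_nonneg _)
      intro i _
      rw [abs_mul]
      have h1 : |sg (K i)| ≤ 1 := by
        have : ∀ k : Fin 3, |sg k| ≤ 1 := by
          intro k; fin_cases k <;> simp [hsg]
        exact this _
      have h2 := abs_ff_le (θ (A i (K i)) i) (θ (B i (K i)) i)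
      nlinarith [abs_nonneg (sg (K i)), abs_nonneg (ff (θ (A i (K i)) i) (θ (B i (K i)) i))]
  rw [integral_finset_sum _ (fun K _ => hintK K)]
  apply Finset.sum_eq_zero
  intro K _
  set s : Finset (Fin (2*n+1)) :=
    Finset.image (fun i => A i (K i)) Finset.univ ∪ Finset.image (fun i => B i (K i)) Finset.univ
    with hs
  have hcard : s.card < Fintype.card (Fin (2*n+1)) := by
    have h1 : s.card ≤ n + n := by
      refine le_trans (Finset.card_union_le _ _) (add_le_add ?_ ?_) <;>
        exact le_trans Finset.card_image_le (by simp)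
    simp only [Fintype.card_fin]
    omega
  have hne : s ≠ Finset.univ := by
    intro h
    rw [h, Finset.card_univ] at hcard
    exact lt_irrefl _ hcard
  have hex : ∃ j₀, j₀ ∉ s := by
    by_contra hall
    push_neg at hall
    exact hne (Finset.eq_univ_iff_forall.2 hall)
  obtain ⟨j₀, hj₀⟩ := hex
  refine pair_prod_zero (m := 2*n) a hza (fun i => A i (K i)) (fun i => B i (K i)) j₀
    (fun i h => hj₀ ?_) (fun i h => hj₀ ?_) (fun i u v => sg (K i) * ff u v)
  · rw [← h]
    exact Finset.mem_union_left _ (Finset.mem_image_of_mem _ (Finset.mem_univ i))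
  · rw [← h]
    exact Finset.mem_union_right _ (Finset.mem_image_of_mem _ (Finset.mem_univ i))

end Aux

/-- integrating `C` against `2n+1` integrable functions of
integral zero gives zero. -/
theorem integral_Ccocycle_zero_mass (n : ℕ) (hn : 1 ≤ n)
    (a : Fin (2 * n + 1) → Torus n → ℝ)
    (hint : ∀ j, Integrable (a j) (torusMeasure n))
    (hzero : ∀ j, ∫ θ, a j θ ∂(torusMeasure n) = 0) :
    ∫ θ : Fin (2 * n + 1) → Torus n, Ccocycle n θ * ∏ j, a j (θ j)
      ∂(Measure.pi fun _ => torusMeasure n) = 0 := by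
  classical
  set ν := (Measure.pi fun _ : Fin (2*n+1) => torusMeasure n) with hν
  -- position functions
  set Q0 : Equiv.Perm (Fin (2*n+1)) → Fin n → Fin (2*n+1) :=
    fun σ i => σ ⟨2 * i.1, by have := i.2; omega⟩ with hQ0
  set Q1 : Equiv.Perm (Fin (2*n+1)) → Fin n → Fin (2*n+1) :=
    fun σ i => σ ⟨2 * i.1 + 1, by have := i.2; omega⟩ with hQ1
  set Q2 : Equiv.Perm (Fin (2*n+1)) → Fin n → Fin (2*n+1) :=
    fun σ i => σ ⟨2 * i.1 + 2, by have := i.2; omega⟩ with hQ2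
  set Df : Equiv.Perm (Fin (2*n+1)) → (Fin (2*n+1) → Torus n) → ℝ := fun σ θ =>
    ∏ i, (ff (θ (Q0 σ i) i) (θ (Q2 σ i) i) - ff (θ (Q0 σ i) i) (θ (Q1 σ i) i)
            - ff (θ (Q1 σ i) i) (θ (Q2 σ i) i)) with hDf
  -- almost everywhere, all relevant coordinates are distinct
  have hae : ∀ᵐ θ ∂ν, ∀ p q : Fin (2*n+1), p ≠ q → ∀ i : Fin n, θ p i ≠ θ q i := by
    rw [ae_all_iff]
    intro p
    rw [ae_all_iff]
    intro q
    by_cases hpq : p = q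
    · exact Filter.Eventually.of_forall (fun θ h => absurd hpq h)
    · have : ∀ᵐ θ ∂ν, ∀ i : Fin n, θ p i ≠ θ q i := by
        rw [ae_all_iff]
        intro i
        have h0 := coordNull (m := 2*n) p q hpq i
        rw [ae_iff]
        simpa [not_not] using h0
      filter_upwards [this] with θ h _ using h
  -- the pointwise identity on the good set
  have hCC : ∀ θ : Fin (2*n+1) → Torus n,
      (∀ p q : Fin (2*n+1), p ≠ q → ∀ i : Fin n, θ p i ≠ θ q i) →
      Ccocycle n θ * ∏ j, a j (θ j)
      = ∑ σ : Equiv.Perm (Fin (2*n+1)),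
          ((1 / (2*n+1).factorial : ℝ) * ((Equiv.Perm.sign σ : ℤ) : ℝ))
            * (Df σ θ * ∏ j, a j (θ j)) := by
    intro θ hθ
    have h1 : Ccocycle n θ = (1 / (2*n+1).factorial : ℝ)
        * ∑ σ : Equiv.Perm (Fin (2*n+1)), ((Equiv.Perm.sign σ : ℤ) : ℝ) * Df σ θ := by
      rw [Ccocycle]
      congr 1
      refine Finset.sum_congr rfl (fun σ _ => ?_)
      congr 1
      refine Finset.prod_congr rfl (fun i _ => ?_)
      have hne01 : Q0 σ i ≠ Q1 σ i :=
        fun h => by simpa [Fin.ext_iff] using σ.injective h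
      have hne12 : Q1 σ i ≠ Q2 σ i :=
        fun h => by simpa [Fin.ext_iff] using σ.injective h
      have hne02 : Q0 σ i ≠ Q2 σ i :=
        fun h => by simpa [Fin.ext_iff] using σ.injective h
      exact eCocycle_eq (hθ _ _ hne01 i) (hθ _ _ hne12 i) (hθ _ _ hne02 i)
    rw [h1, Finset.mul_sum, Finset.sum_mul]
    refine Finset.sum_congr rfl (fun σ _ => ?_)
    ring
  have hcong : ∫ θ, Ccocycle n θ * ∏ j, a j (θ j) ∂ν
      = ∫ θ, (∑ σ : Equiv.Perm (Fin (2*n+1)),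
          ((1 / (2*n+1).factorial : ℝ) * ((Equiv.Perm.sign σ : ℤ) : ℝ))
            * (Df σ θ * ∏ j, a j (θ j))) ∂ν := by
    apply integral_congr_ae
    filter_upwards [hae] with θ h using hCC θ h
  rw [hcong]
  have hintD : ∀ σ : Equiv.Perm (Fin (2*n+1)),
      Integrable (fun θ => Df σ θ * ∏ j, a j (θ j)) ν := by
    intro σ
    apply Integrable.bdd_mul (c := 3 ^ n) (integrable_prod_eval a hint)
    · apply Measurable.aestronglyMeasurable
      apply Finset.measurable_prod
      intro i _
      exact ((measurable_ff_pair (Q0 σ i) (Q2 σ i) i).sub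
        (measurable_ff_pair (Q0 σ i) (Q1 σ i) i)).sub
        (measurable_ff_pair (Q1 σ i) (Q2 σ i) i)
    · refine Filter.Eventually.of_forall (fun θ => ?_)
      rw [Real.norm_eq_abs, hDf, Finset.abs_prod]
      calc (∏ i, |ff (θ (Q0 σ i) i) (θ (Q2 σ i) i) - ff (θ (Q0 σ i) i) (θ (Q1 σ i) i)
              - ff (θ (Q1 σ i) i) (θ (Q2 σ i) i)|)
          ≤ ∏ _i : Fin n, (3:ℝ) := by
            apply Finset.prod_le_prod (fun i _ => abs_nonneg _)
            intro i _
            have h1 := abs_ff_le (θ (Q0 σ i) i) (θ (Q2 σ i) i)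
            have h2 := abs_ff_le (θ (Q0 σ i) i) (θ (Q1 σ i) i)
            have h3 := abs_ff_le (θ (Q1 σ i) i) (θ (Q2 σ i) i)
            calc |ff (θ (Q0 σ i) i) (θ (Q2 σ i) i) - ff (θ (Q0 σ i) i) (θ (Q1 σ i) i)
                  - ff (θ (Q1 σ i) i) (θ (Q2 σ i) i)|
                ≤ |ff (θ (Q0 σ i) i) (θ (Q2 σ i) i) - ff (θ (Q0 σ i) i) (θ (Q1 σ i) i)|
                  + |ff (θ (Q1 σ i) i) (θ (Q2 σ i) i)| := abs_sub _ _
              _ ≤ |ff (θ (Q0 σ i) i) (θ (Q2 σ i) i)| + |ff (θ (Q0 σ i) i) (θ (Q1 σ i) i)|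
                  + |ff (θ (Q1 σ i) i) (θ (Q2 σ i) i)| := by
                    have := abs_sub (ff (θ (Q0 σ i) i) (θ (Q2 σ i) i))
                      (ff (θ (Q0 σ i) i) (θ (Q1 σ i) i))
                    linarith
              _ ≤ 3 := by linarith
        _ = (3:ℝ) ^ n := by
            rw [Finset.prod_const]
            simp
  rw [integral_finset_sum _ (fun σ _ => (hintD σ).const_mul _)]
  apply Finset.sum_eq_zero
  intro σ _
  rw [integral_const_mul]
  have hz := Dterm_zero a hint hzero (Q0 σ) (Q1 σ) (Q2 σ)
  rw [hν, hz, mul_zero]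
end
end

section
/- Let n ≥ 1, let φ ∈ L²(𝕋ⁿ, ℝ) with ∫_{𝕋ⁿ} φ² dθ = 1, and let f₁,…,f_{2n} ∈ L²(𝕋ⁿ, ℝ) with ∫_{𝕋ⁿ} φ f_j dθ = 0 for each j = 1,…,2n. Then ∫_{(𝕋ⁿ)^{2n+1}} C(θ₀,…,θ_{2n}) (φ²(θ₀) − 1) (φf₁)(θ₁) (φf₂)(θ₂) ⋯ (φf_{2n})(θ_{2n}) dθ₀⋯dθ_{2n} = 0. -/
open MeasureTheory Real
open scoped Real

noncomputable section

namespace BP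

lemma two_pi_pos : (0:ℝ) < 2 * π := by positivity

noncomputable def rho (t : Circle2pi) : ℝ := (AddCircle.equivIco (2*π) 0 t : ℝ)
noncomputable def iot (t : Circle2pi) : ℝ := (AddCircle.equivIoc (2*π) 0 t : ℝ)

lemma rho_coe (u : ℝ) : rho (u : Circle2pi) = toIcoMod two_pi_pos 0 u := rfl
lemma iot_coe (u : ℝ) : iot (u : Circle2pi) = toIocMod two_pi_pos 0 u := rfl

lemma rho_mem (t : Circle2pi) : rho t ∈ Set.Ico (0:ℝ) (2*π) := by
  have := (AddCircle.equivIco (2*π) 0 t).2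
  simpa [rho] using this

lemma coe_rho (t : Circle2pi) : ((rho t : ℝ) : Circle2pi) = t :=
  (AddCircle.equivIco (2*π) 0).symm_apply_apply t

lemma btw_iff (a b c : Circle2pi) : Btw.btw a b c ↔ rho (b - a) ≤ iot (c - a) := Iff.rfl

lemma rho_pos {t : Circle2pi} (h : t ≠ 0) : 0 < rho t := by
  rcases (rho_mem t).1.lt_or_eq with h' | h'
  · exact h'
  · exfalso; apply h
    rw [← coe_rho t, ← h']
    simp

lemma iot_eq_rho {t : Circle2pi} (h : t ≠ 0) : iot t = rho t := by
  induction t using QuotientAddGroup.induction_on with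
  | H u =>
    rw [rho_coe, iot_coe]
    refine ((AddCommGroup.not_modEq_iff_toIcoMod_eq_toIocMod two_pi_pos).mp ?_).symm
    rw [AddCommGroup.modEq_iff_eq_mod_zmultiples]
    exact fun h' => h h'.symm

lemma rho_add_rho_neg {t : Circle2pi} (h : t ≠ 0) : rho t + rho (-t) = 2*π := by
  induction t using QuotientAddGroup.induction_on with
  | H u =>
    have key := toIcoMod_add_toIocMod_zero two_pi_pos u 0
    rw [sub_zero, zero_sub] at key
    have hcoe : (((-u : ℝ)) : Circle2pi) = -((u:ℝ) : Circle2pi) := rfl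
    have h2 : (((-u : ℝ)) : Circle2pi) ≠ 0 := by
      rw [hcoe]; simpa using h
    rw [show -((u:ℝ) : Circle2pi) = (((-u : ℝ)) : Circle2pi) from hcoe.symm,
      ← iot_eq_rho h2, rho_coe, iot_coe]
    exact key

lemma exists_k (a b c : Circle2pi) (hab : a ≠ b) (hbc : b ≠ c) (hca : c ≠ a) :
    rho (b-a) + rho (c-b) + rho (a-c) = 2*π ∨
    rho (b-a) + rho (c-b) + rho (a-c) = 2*(2*π) := by
  set x := rho (b-a) with hxd; set y := rho (c-b) with hyd; set z := rho (a-c) with hzd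
  have hx : 0 < x := rho_pos (sub_ne_zero.mpr (Ne.symm hab))
  have hy : 0 < y := rho_pos (sub_ne_zero.mpr (Ne.symm hbc))
  have hz : 0 < z := rho_pos (sub_ne_zero.mpr (Ne.symm hca))
  have hx2 := (rho_mem (b-a)).2
  have hy2 := (rho_mem (c-b)).2
  have hz2 := (rho_mem (a-c)).2
  rw [← hxd] at hx2; rw [← hyd] at hy2; rw [← hzd] at hz2
  have hcoe : ((x + y + z : ℝ) : Circle2pi) = 0 := by
    have : ((x + y + z : ℝ) : Circle2pi)
        = ((x:ℝ):Circle2pi) + ((y:ℝ):Circle2pi) + ((z:ℝ):Circle2pi) := rfl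
    rw [this, hxd, hyd, hzd, coe_rho, coe_rho, coe_rho]; abel
  rw [QuotientAddGroup.eq_zero_iff, AddSubgroup.mem_zmultiples_iff] at hcoe
  obtain ⟨k, hk⟩ := hcoe
  rw [zsmul_eq_mul] at hk
  have hk1 : 0 < k := by
    by_contra hk'
    push_neg at hk'
    have : (k : ℝ) * (2*π) ≤ 0 :=
      mul_nonpos_of_nonpos_of_nonneg (by exact_mod_cast hk') (by positivity)
    nlinarith
  have hk3 : k < 3 := by
    by_contra hk'
    push_neg at hk'
    have h3 : (3:ℝ) ≤ (k:ℝ) := by exact_mod_cast hk'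
    nlinarith [two_pi_pos]
  interval_cases k <;> [left; right] <;> (push_cast at hk; linarith)

/-- The sawtooth function on the circle. -/
noncomputable def sawF (t : Circle2pi) : ℝ := 1 - rho t / π

lemma eCocycle_eq_sawSum (a b c : Circle2pi) (hab : a ≠ b) (hbc : b ≠ c) (hca : c ≠ a) :
    eCocycle a b c = sawF (b-a) + sawF (c-b) + sawF (a-c) := by
  have hab' : b - a ≠ 0 := sub_ne_zero.mpr (Ne.symm hab)
  have hbc' : c - b ≠ 0 := sub_ne_zero.mpr (Ne.symm hbc)
  have hca' : a - c ≠ 0 := sub_ne_zero.mpr (Ne.symm hca)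
  have hca'' : c - a ≠ 0 := sub_ne_zero.mpr hca
  have hbc'' : b - c ≠ 0 := sub_ne_zero.mpr hbc
  set x := rho (b-a) with hxd; set y := rho (c-b) with hyd; set z := rho (a-c) with hzd
  have hx : 0 < x := rho_pos hab'
  have hy : 0 < y := rho_pos hbc'
  have hz : 0 < z := rho_pos hca'
  have hx2 := (rho_mem (b-a)).2
  have hy2 := (rho_mem (c-b)).2
  have hz2 := (rho_mem (a-c)).2
  rw [← hxd] at hx2; rw [← hyd] at hy2; rw [← hzd] at hz2
  have hpi : (0:ℝ) < π := Real.pi_pos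
  have hrca : rho (c - a) = 2*π - z := by
    have := rho_add_rho_neg hca'
    rw [neg_sub] at this; linarith
  have hrbc : rho (b - c) = 2*π - y := by
    have := rho_add_rho_neg hbc'
    rw [neg_sub] at this; linarith
  have hbtw1 : Btw.btw a b c ↔ x + z ≤ 2*π := by
    rw [btw_iff, iot_eq_rho hca'', hrca, ← hxd]
    constructor <;> intro <;> linarith
  have hbtw2 : Btw.btw c b a ↔ 2*π ≤ y + z := by
    rw [btw_iff, iot_eq_rho hca', ← hzd, hrbc]
    constructor <;> intro <;> linarith
  have hsbtw : sbtw a b c ↔ (x + z ≤ 2*π ∧ ¬ (2*π ≤ y + z)) := by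
    rw [sbtw_iff_btw_not_btw, hbtw1, hbtw2]
  have hsaw : sawF (b-a) + sawF (c-b) + sawF (a-c) = 3 - (x + y + z)/π := by
    simp only [sawF, ← hxd, ← hyd, ← hzd]; field_simp; ring
  rcases exists_k a b c hab hbc hca with hsum | hsum <;>
    rw [← hxd, ← hyd, ← hzd] at hsum
  · have hs : sbtw a b c := hsbtw.mpr ⟨by linarith, by push_neg; linarith⟩
    rw [eCocycle, if_pos hs, hsaw, hsum]
    field_simp; ring
  · have hs : ¬ sbtw a b c := by
      rw [hsbtw]; push_neg; intro _; linarith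
    rw [eCocycle, if_neg hs, hsaw, hsum]
    field_simp; ring

instance : NullSingletonClass (circleMeasure) := by
  constructor
  intro x
  have h1 : (volume : Measure Circle2pi) {x} = 0 := by
    have h := AddCircle.volume_closedBall (T := 2*π) (x := x) 0
    rw [Metric.closedBall_zero] at h
    rw [h]
    have : min (2*π) (2*0) = 0 := by rw [mul_zero]; exact min_eq_right two_pi_pos.le
    rw [this]; simp
  have h2 := AddCircle.volume_eq_smul_haarAddCircle (T := 2*π)
  rw [h2, Measure.smul_apply, smul_eq_mul] at h1
  have : ENNReal.ofReal (2*π) ≠ 0 := ne_of_gt (ENNReal.ofReal_pos.mpr two_pi_pos)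
  exact (mul_eq_zero.mp h1).resolve_left this

lemma measurable_rho : Measurable rho :=
  measurable_subtype_coe.comp (AddCircle.measurableEquivIco (T := 2*π) 0).measurable

lemma measurable_sawF : Measurable sawF :=
  (measurable_const.sub (measurable_rho.div_const π))

lemma abs_sawF_le (t : Circle2pi) : |sawF t| ≤ 1 := by
  have h1 := (rho_mem t).1
  have h2 := (rho_mem t).2
  have hpi : (0:ℝ) < π := Real.pi_pos
  rw [abs_le, sawF]
  constructor
  · rw [le_sub_iff_add_le]
    have : rho t / π < 2 := by rw [div_lt_iff₀ hpi]; linarith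
    linarith
  · have : 0 ≤ rho t / π := div_nonneg h1 hpi.le
    linarith

section MeasArgs
variable {α : Type*} [MeasurableSpace α] {μ : Measure α} [IsProbabilityMeasure μ]

/-- Product of integrable functions of independent coordinates is integrable. -/
lemma integrable_pi_prod : ∀ (m : ℕ) (h : Fin m → α → ℝ), (∀ k, Integrable (h k) μ) →
    Integrable (fun x : Fin m → α => ∏ k, h k (x k)) (Measure.pi fun _ => μ) := by
  intro m
  induction m with
  | zero =>
    intro h _
    simp only [Finset.univ_eq_empty, Finset.prod_empty]
    exact integrable_const 1
  | succ m ih =>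
    intro h hh
    have mp := (measurePreserving_piFinSuccAbove (fun _ : Fin (m+1) => μ) 0).symm
    rw [← mp.integrable_comp_emb (MeasurableEquiv.measurableEmbedding _)]
    simp_rw [MeasurableEquiv.piFinSuccAbove_symm_apply, Fin.insertNthEquiv,
      Fin.prod_univ_succ, Fin.insertNth_zero]
    simp only [Fin.zero_succAbove, Function.comp_def, Fin.cons_zero, Fin.cons_succ,
      Equiv.coe_fn_mk]
    exact Integrable.mul_prod (hh 0) (ih _ (fun k => hh _))

/-- Key Fubini vanishing lemma: if the first factor has mean zero and the second factor
does not depend on the coordinate `k₀`, the integral vanishes. -/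
lemma integral_insert_zero (m : ℕ) (G : (Fin m → α) → ℝ) (h0 : α → ℝ) (k₀ : Fin (m+1))
    (hmean : ∫ x, h0 x ∂μ = 0) :
    ∫ θ : Fin (m+1) → α, h0 (θ k₀) * G (fun j => θ (k₀.succAbove j))
      ∂(Measure.pi fun _ => μ) = 0 := by
  have mp0 := measurePreserving_piFinSuccAbove (fun _ : Fin (m+1) => μ) k₀
  have mp := mp0.symm
  rw [← mp.integral_comp']
  simp_rw [MeasurableEquiv.piFinSuccAbove_symm_apply, Fin.insertNthEquiv, Equiv.coe_fn_mk,
    Fin.insertNth_apply_same, Fin.insertNth_apply_succAbove]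
  rw [MeasureTheory.integral_prod_mul h0 G]
  rw [hmean, zero_mul]

end MeasArgs

/-- Preimage of a null set under eval is null. -/
lemma pi_null_eval {n : ℕ} (m : ℕ) (k : Fin m) {A : Set (Torus n)} (hA : MeasurableSet A)
    (h0 : torusMeasure n A = 0) :
    Measure.pi (fun _ : Fin m => torusMeasure n) {θ | θ k ∈ A} = 0 := by
  cases m with
  | zero => exact k.elim0
  | succ m =>
    have mp := measurePreserving_piFinSuccAbove (fun _ : Fin (m+1) => torusMeasure n) k
    have hset : {θ : Fin (m+1) → Torus n | θ k ∈ A}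
        = (MeasurableEquiv.piFinSuccAbove (fun _ => Torus n) k) ⁻¹' (A ×ˢ Set.univ) := by
      ext θ
      simp [MeasurableEquiv.piFinSuccAbove]
      exact Iff.rfl
    rw [hset, mp.measure_preimage (hA.prod MeasurableSet.univ).nullMeasurableSet]
    rw [Measure.prod_prod, h0, zero_mul]

/-- Coincidence sets are null. -/
lemma pi_null_eq {n : ℕ} (m : ℕ) (p q : Fin (m+1)) (i : Fin n) (hpq : p ≠ q) :
    Measure.pi (fun _ : Fin (m+1) => torusMeasure n) {θ | θ p i = θ q i} = 0 := by
  obtain ⟨j, hj⟩ := Fin.exists_succAbove_eq (Ne.symm hpq)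
  have mp := measurePreserving_piFinSuccAbove (fun _ : Fin (m+1) => torusMeasure n) p
  have hTm : MeasurableSet {z : Torus n × (Fin m → Torus n) | z.1 i = z.2 j i} := by
    apply measurableSet_eq_fun
    · exact measurable_fst.eval
    · exact (measurable_snd.eval (a := j)).eval
  have hset : {θ : Fin (m+1) → Torus n | θ p i = θ q i}
      = (MeasurableEquiv.piFinSuccAbove (fun _ => Torus n) p) ⁻¹'
        {z : Torus n × (Fin m → Torus n) | z.1 i = z.2 j i} := by
    ext θ
    simp [MeasurableEquiv.piFinSuccAbove, Fin.removeNth, ← hj]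
    exact Iff.rfl
  rw [hset, mp.measure_preimage hTm.nullMeasurableSet]
  rw [Measure.measure_prod_null hTm]
  refine Filter.Eventually.of_forall (fun x => ?_)
  show (Measure.pi fun _ : Fin m => torusMeasure n)
    (Prod.mk x ⁻¹' {z : Torus n × (Fin m → Torus n) | z.1 i = z.2 j i}) = 0
  have heq : (Prod.mk x ⁻¹' {z : Torus n × (Fin m → Torus n) | z.1 i = z.2 j i})
      = {r : Fin m → Torus n | r j ∈ {y : Torus n | y i = x i}} := by
    ext r; simp [eq_comm]
  rw [heq]
  have hnull : torusMeasure n {y : Torus n | y i = x i} = 0 :=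
    MeasureTheory.Measure.pi_hyperplane (fun _ : Fin n => circleMeasure) i (x i)
  exact pi_null_eval m j
    (measurableSet_eq_fun (measurable_pi_apply i) measurable_const) hnull

/-- Almost every configuration is in "good position". -/
lemma ae_good {n : ℕ} (m : ℕ) :
    ∀ᵐ θ : Fin (m+1) → Torus n ∂(Measure.pi fun _ => torusMeasure n),
      ∀ (p q : Fin (m+1)) (i : Fin n), p ≠ q → θ p i ≠ θ q i := by
  rw [MeasureTheory.ae_all_iff]
  intro p
  rw [MeasureTheory.ae_all_iff]
  intro q
  rw [MeasureTheory.ae_all_iff]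
  intro i
  by_cases hpq : p = q
  · exact Filter.Eventually.of_forall (fun θ h => absurd hpq h)
  · rw [MeasureTheory.ae_iff]
    have : {θ : Fin (m+1) → Torus n | ¬(p ≠ q → θ p i ≠ θ q i)} = {θ | θ p i = θ q i} := by
      ext θ; simp [hpq]
    rw [this]
    exact pi_null_eq m p q i hpq

/-- Positions of the "numerator" point of the three sawtooth factors. -/
def np {n : ℕ} (i : Fin n) : Fin 3 → Fin (2*n+1) :=
  ![⟨2*i.1+1, by have := i.2; omega⟩, ⟨2*i.1+2, by have := i.2; omega⟩,
    ⟨2*i.1, by have := i.2; omega⟩]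

/-- Positions of the "denominator" point of the three sawtooth factors. -/
def dp {n : ℕ} (i : Fin n) : Fin 3 → Fin (2*n+1) :=
  ![⟨2*i.1, by have := i.2; omega⟩, ⟨2*i.1+1, by have := i.2; omega⟩,
    ⟨2*i.1+2, by have := i.2; omega⟩]

end BP

open BP in
/-- reduction to the basepoint `𝟙`. -/
theorem integral_Ccocycle_basepoint_reduction (n : ℕ) (hn : 1 ≤ n)
    (φ : Torus n → ℝ) (f : Fin (2 * n) → Torus n → ℝ)
    (hφ : MemLp φ 2 (torusMeasure n)) (hf : ∀ j, MemLp (f j) 2 (torusMeasure n))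
    (hφ1 : ∫ θ, φ θ ^ 2 ∂(torusMeasure n) = 1)
    (horth : ∀ j, ∫ θ, φ θ * f j θ ∂(torusMeasure n) = 0) :
    ∫ θ : Fin (2 * n + 1) → Torus n,
        Ccocycle n θ *
          ((φ (θ 0) ^ 2 - 1) * ∏ j : Fin (2 * n), φ (θ j.succ) * f j (θ j.succ))
      ∂(Measure.pi fun _ => torusMeasure n) = 0 := by
  classical
  set h : Fin (2*n+1) → Torus n → ℝ :=
    Fin.cons (fun θ => φ θ ^ 2 - 1) (fun j θ => φ θ * f j θ) with hh
  have hInt : ∀ k, Integrable (h k) (torusMeasure n) := by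
    intro k
    induction k using Fin.cases with
    | zero =>
      simp only [hh, Fin.cons_zero]
      exact hφ.integrable_sq.sub (integrable_const 1)
    | succ j =>
      simp only [hh, Fin.cons_succ]
      have hpqr : (1 : ENNReal) / 1 = 1/2 + 1/2 := by
        rw [ENNReal.add_halves, one_div_one]
      have hm : MemLp (φ • f j) 1 (torusMeasure n) := (hf j).smul hφ
      have := memLp_one_iff_integrable.mp hm
      exact this
  have hMean : ∀ k, ∫ x, h k x ∂(torusMeasure n) = 0 := by
    intro k
    induction k using Fin.cases with
    | zero =>
      simp only [hh, Fin.cons_zero]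
      rw [integral_sub hφ.integrable_sq (integrable_const 1), hφ1]
      simp
    | succ j =>
      simp only [hh, Fin.cons_succ]
      exact horth j
  have hH : Integrable (fun θ : Fin (2*n+1) → Torus n => ∏ k, h k (θ k))
      (Measure.pi fun _ => torusMeasure n) := integrable_pi_prod _ h hInt
  -- measurability and boundedness of the sawtooth products
  have hFmeas : ∀ (u v : Fin n → Fin (2*n+1)),
      Measurable (fun θ : Fin (2*n+1) → Torus n => ∏ i, sawF (θ (u i) i - θ (v i) i)) := by
    intro u v
    apply Finset.measurable_prod
    intro i _
    exact measurable_sawF.comp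
      (by fun_prop)
  have hFbd : ∀ (u v : Fin n → Fin (2*n+1)) (θ : Fin (2*n+1) → Torus n),
      |∏ i, sawF (θ (u i) i - θ (v i) i)| ≤ 1 := by
    intro u v θ
    rw [Finset.abs_prod]
    exact Finset.prod_le_one (fun i _ => abs_nonneg _) (fun i _ => abs_sawF_le _)
  have hIntTerm : ∀ (u v : Fin n → Fin (2*n+1)),
      Integrable (fun θ : Fin (2*n+1) → Torus n =>
          (∏ i, sawF (θ (u i) i - θ (v i) i)) * ∏ k, h k (θ k))
        (Measure.pi fun _ => torusMeasure n) := by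
    intro u v
    exact hH.bdd_mul (hFmeas u v).aestronglyMeasurable
      (c := 1) (Filter.Eventually.of_forall fun θ => by rw [Real.norm_eq_abs]; exact hFbd u v θ)
  -- main vanishing lemma for each term
  have hTerm : ∀ (u v : Fin n → Fin (2*n+1)),
      ∫ θ : Fin (2*n+1) → Torus n,
          (∏ i, sawF (θ (u i) i - θ (v i) i)) * ∏ k, h k (θ k)
        ∂(Measure.pi fun _ => torusMeasure n) = 0 := by
    intro u v
    obtain ⟨k₀, hk₀⟩ : ∃ k₀ : Fin (2*n+1),
        k₀ ∉ (Finset.image u Finset.univ ∪ Finset.image v Finset.univ) := by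
      by_contra hcon
      push_neg at hcon
      have hsub : (Finset.univ : Finset (Fin (2*n+1)))
          ⊆ Finset.image u Finset.univ ∪ Finset.image v Finset.univ := fun k _ => hcon k
      have hcard := Finset.card_le_card hsub
      have h1 : (Finset.image u Finset.univ ∪ Finset.image v Finset.univ).card ≤ n + n :=
        le_trans (Finset.card_union_le _ _)
          (add_le_add (Finset.card_image_le.trans (by simp))
            (Finset.card_image_le.trans (by simp)))
      simp only [Finset.card_univ, Fintype.card_fin] at hcard
      omega
    simp only [Finset.mem_union, Finset.mem_image, Finset.mem_univ, true_and, not_or,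
      not_exists] at hk₀
    have hu : ∀ i, u i ≠ k₀ := fun i => hk₀.1 i
    have hv : ∀ i, v i ≠ k₀ := fun i => hk₀.2 i
    choose u' hu' using fun i => Fin.exists_succAbove_eq (hu i)
    choose v' hv' using fun i => Fin.exists_succAbove_eq (hv i)
    have key := integral_insert_zero (μ := torusMeasure n) (2*n)
      (fun r : Fin (2*n) → Torus n =>
        (∏ i, sawF (r (u' i) i - r (v' i) i)) * ∏ j : Fin (2*n), h (k₀.succAbove j) (r j))
      (h k₀) k₀ (hMean k₀)
    rw [← key]
    apply integral_congr_ae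
    apply Filter.Eventually.of_forall
    intro θ
    have hsplit : ∏ k, h k (θ k)
        = h k₀ (θ k₀) * ∏ j : Fin (2*n), h (k₀.succAbove j) (θ (k₀.succAbove j)) :=
      Fin.prod_univ_succAbove (fun k => h k (θ k)) k₀
    have h1 : ∏ i, sawF (θ (u i) i - θ (v i) i)
        = ∏ i, sawF (θ (k₀.succAbove (u' i)) i - θ (k₀.succAbove (v' i)) i) := by
      apply Finset.prod_congr rfl
      intro i _
      rw [hu' i, hv' i]
    dsimp only
    rw [hsplit, h1]
    ring
  -- a.e. rewriting of the integrand
  have hae : (fun θ : Fin (2*n+1) → Torus n => Ccocycle n θ *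
        ((φ (θ 0) ^ 2 - 1) * ∏ j : Fin (2*n), φ (θ j.succ) * f j (θ j.succ)))
      =ᵐ[Measure.pi fun _ => torusMeasure n]
      (fun θ => (1 / (2*n+1).factorial : ℝ) *
        ∑ σ : Equiv.Perm (Fin (2*n+1)), ∑ t : Fin n → Fin 3,
          ((Equiv.Perm.sign σ : ℤ) : ℝ) *
            ((∏ i, sawF (θ (σ (np i (t i))) i - θ (σ (dp i (t i))) i)) *
              ∏ k, h k (θ k))) := by
    filter_upwards [ae_good (n := n) (2*n)] with θ hθ
    have hHeq : ((φ (θ 0) ^ 2 - 1) * ∏ j : Fin (2*n), φ (θ j.succ) * f j (θ j.succ))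
        = ∏ k, h k (θ k) := by
      rw [Fin.prod_univ_succ (f := fun k => h k (θ k))]
      simp [hh]
    rw [hHeq]
    have hexp : ∀ σ : Equiv.Perm (Fin (2*n+1)),
        (∏ i : Fin n,
          eCocycle (θ (σ ⟨2 * i.1, by have := i.2; omega⟩) i)
            (θ (σ ⟨2 * i.1 + 1, by have := i.2; omega⟩) i)
            (θ (σ ⟨2 * i.1 + 2, by have := i.2; omega⟩) i))
        = ∑ t : Fin n → Fin 3,
            ∏ i, sawF (θ (σ (np i (t i))) i - θ (σ (dp i (t i))) i) := by
      intro σ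
      have hps := Fintype.prod_sum (κ := fun _ : Fin n => Fin 3)
        (f := fun i j => sawF (θ (σ (np i j)) i - θ (σ (dp i j)) i))
      rw [← hps]
      apply Finset.prod_congr rfl
      intro i _
      rw [Fin.sum_univ_three]
      have hne : ∀ (a b : ℕ) (ha : a < 2*n+1) (hb : b < 2*n+1), a ≠ b →
          σ ⟨a, ha⟩ ≠ σ ⟨b, hb⟩ := by
        intro a b ha hb hab
        exact (Equiv.injective σ).ne (by simp [Fin.ext_iff, hab])
      simp only [np, dp, Matrix.cons_val_zero, Matrix.cons_val_one, Matrix.head_cons,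
        Matrix.cons_val_two, Matrix.tail_cons]
      exact eCocycle_eq_sawSum _ _ _
        (hθ _ _ i (hne _ _ _ _ (by omega)))
        (hθ _ _ i (hne _ _ _ _ (by omega)))
        (hθ _ _ i (hne _ _ _ _ (by omega)))
    simp only [Ccocycle, hexp]
    simp only [Finset.mul_sum, Finset.sum_mul, mul_assoc]
  rw [integral_congr_ae hae]
  rw [MeasureTheory.integral_const_mul]
  rw [integral_finset_sum _ (fun σ _ => integrable_finset_sum _
    (fun t _ => ((hIntTerm (fun i => σ (np i (t i))) (fun i => σ (dp i (t i)))).const_mul ((Equiv.Perm.sign σ : ℤ) : ℝ))))]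
  have hzero : ∀ σ : Equiv.Perm (Fin (2*n+1)),
      ∫ θ : Fin (2*n+1) → Torus n, ∑ t : Fin n → Fin 3,
          ((Equiv.Perm.sign σ : ℤ) : ℝ) *
            ((∏ i, sawF (θ (σ (np i (t i))) i - θ (σ (dp i (t i))) i)) * ∏ k, h k (θ k))
        ∂(Measure.pi fun _ => torusMeasure n) = 0 := by
    intro σ
    rw [integral_finset_sum _ (fun t _ =>
      ((hIntTerm (fun i => σ (np i (t i))) (fun i => σ (dp i (t i)))).const_mul _))]
    refine Finset.sum_eq_zero fun t _ => ?_
    rw [MeasureTheory.integral_const_mul,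
      hTerm (fun i => σ (np i (t i))) (fun i => σ (dp i (t i))), mul_zero]
  rw [Finset.sum_congr rfl (fun σ _ => hzero σ), Finset.sum_const, smul_zero, mul_zero]
end
end

section
/- For every integer n ≥ 1, the number of permutations σ of the set {0, 1, …, 2n} such that for every i ∈ {1,…,n} the set {2i−1, 2i} is contained in the image set {σ(2i−2), σ(2i−1), σ(2i)} equals 2ⁿ(2n+1). -/
open MeasureTheory Real
open scoped Real

noncomputable section

namespace CountSuitable

def bext (n : ℕ) (ε : Fin n → Bool) (k : ℕ) : Bool :=
  if h : k < n then ε ⟨k, h⟩ else false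

def wfun (n : ℕ) (ε : Fin n → Bool) (v : Fin (2*n+1)) : Fin (2*n+1) :=
  if 1 ≤ v.1 ∧ bext n ε ((v.1-1)/2) = true then
    if h2 : v.1 % 2 = 1 then ⟨v.1+1, by have := v.isLt; omega⟩
    else ⟨v.1-1, by have := v.isLt; omega⟩
  else v

theorem wfun_invol (n : ℕ) (ε : Fin n → Bool) : Function.Involutive (wfun n ε) := by
  intro v
  by_cases h1 : 1 ≤ v.1 ∧ bext n ε ((v.1-1)/2) = true
  · by_cases h2 : v.1 % 2 = 1
    · have hv1 : wfun n ε v = ⟨v.1+1, by have := v.isLt; omega⟩ := by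
        rw [wfun, if_pos h1, dif_pos h2]
      rw [hv1, wfun,
        if_pos (show 1 ≤ v.1+1 ∧ bext n ε ((v.1+1-1)/2) = true by
          constructor
          · omega
          · have e : (v.1+1-1)/2 = (v.1-1)/2 := by omega
            rw [e]; exact h1.2),
        dif_neg (show ¬((v.1+1) % 2 = 1) by omega)]
      apply Fin.ext; simp
    · have hv1 : wfun n ε v = ⟨v.1-1, by have := v.isLt; omega⟩ := by
        rw [wfun, if_pos h1, dif_neg h2]
      have hv0 : 1 ≤ v.1 := h1.1
      rw [hv1, wfun,
        if_pos (show 1 ≤ v.1-1 ∧ bext n ε ((v.1-1-1)/2) = true by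
          constructor
          · omega
          · have e : (v.1-1-1)/2 = (v.1-1)/2 := by omega
            rw [e]; exact h1.2),
        dif_pos (show (v.1-1) % 2 = 1 by omega)]
      apply Fin.ext; simp; omega
  · rw [wfun]
    conv_lhs => rw [wfun, if_neg h1]
    rw [if_neg h1]

def wperm (n : ℕ) (ε : Fin n → Bool) : Equiv.Perm (Fin (2*n+1)) :=
  (wfun_invol n ε).toPerm

@[simp] theorem wperm_apply (n : ℕ) (ε : Fin n → Bool) (v : Fin (2*n+1)) :
    wperm n ε v = wfun n ε v := rfl

theorem wperm_inv (n : ℕ) (ε : Fin n → Bool) : (wperm n ε)⁻¹ = wperm n ε :=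
  Equiv.ext fun _ => rfl

def cyc (n : ℕ) (p : Fin (2*n+1)) : Equiv.Perm (Fin (2*n+1)) where
  toFun v := if h : v.1 < p.1 then ⟨v.1+1, by have := p.isLt; omega⟩
             else if v.1 = p.1 then ⟨0, by omega⟩ else v
  invFun v := if v.1 = 0 then p else if h : v.1 ≤ p.1 then ⟨v.1-1, by have := v.isLt; omega⟩ else v
  left_inv := by
    intro v; dsimp only; split_ifs <;> (apply Fin.ext) <;> simp_all <;> omega
  right_inv := by
    intro v; dsimp only; split_ifs <;> (apply Fin.ext) <;> simp_all <;> omega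

theorem cyc_apply_val (n : ℕ) (p v : Fin (2*n+1)) :
    ((cyc n p) v).1 = if v.1 < p.1 then v.1+1 else if v.1 = p.1 then 0 else v.1 := by
  rw [cyc]; dsimp only [Equiv.coe_fn_mk]; split_ifs <;> rfl

theorem cyc_symm_apply_val (n : ℕ) (p v : Fin (2*n+1)) :
    ((cyc n p).symm v).1 = if v.1 = 0 then p.1 else if v.1 ≤ p.1 then v.1-1 else v.1 := by
  rw [cyc]; dsimp only [Equiv.coe_fn_symm_mk]; split_ifs <;> rfl

theorem wfun_cases (n : ℕ) (ε : Fin n → Bool) (v : Fin (2*n+1)) :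
    (wfun n ε v).1 = v.1 ∨ ((wfun n ε v).1 = v.1+1 ∧ v.1 % 2 = 1) ∨
      ((wfun n ε v).1 = v.1-1 ∧ v.1 % 2 = 0 ∧ 1 ≤ v.1) := by
  rw [wfun]
  by_cases h1 : 1 ≤ v.1 ∧ bext n ε ((v.1-1)/2) = true
  · rw [if_pos h1]
    by_cases h2 : v.1 % 2 = 1
    · rw [dif_pos h2]; right; left; exact ⟨rfl, h2⟩
    · rw [dif_neg h2]; right; right; exact ⟨rfl, by omega, h1.1⟩
  · rw [if_neg h1]; left; rfl

theorem wfun_zero (n : ℕ) (ε : Fin n → Bool) (v : Fin (2*n+1)) (hv : v.1 = 0) :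
    wfun n ε v = v := by
  rw [wfun, if_neg]; omega

/-- wfun at an odd point. -/
theorem wfun_odd (n : ℕ) (ε : Fin n → Bool) (j : ℕ) (hj : j < n) :
    wfun n ε ⟨2*j+1, by omega⟩ =
      if ε ⟨j, hj⟩ then ⟨2*j+2, by omega⟩ else ⟨2*j+1, by omega⟩ := by
  rw [wfun]
  have e : ((⟨2*j+1, by omega⟩ : Fin (2*n+1)).1 - 1)/2 = j := by simp
  by_cases hε : ε ⟨j, hj⟩
  · rw [if_pos ⟨by simp, by rw [e, bext, dif_pos hj, hε]⟩, dif_pos (by simp [Nat.add_mod]),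
      if_pos hε]
  · rw [if_neg, if_neg hε]
    rw [e, bext, dif_pos hj]
    simp [hε]

def Good (n : ℕ) (σ : Equiv.Perm (Fin (2*n+1))) : Prop :=
  ∀ v : Fin (2*n+1), 1 ≤ v.1 →
    2*((v.1-1)/2) ≤ (σ⁻¹ v).1 ∧ (σ⁻¹ v).1 ≤ 2*((v.1-1)/2)+2

theorem lemA (n : ℕ) (σ : Equiv.Perm (Fin (2*n+1))) (hσ : Good n σ) (i : ℕ) (hin : i < n)
    (hi : 2*i+2 < (σ⁻¹ 0).1) (v : Fin (2*n+1)) (hv : v.1 = 2*i+1 ∨ v.1 = 2*i+2) :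
    (σ⁻¹ v).1 ≠ 2*i+2 := by
  have hp := (σ⁻¹ 0).isLt
  have hb : (2*i+3 : ℕ) < 2*n+1 := by omega
  have ha : (2*i+2 : ℕ) < 2*n+1 := by omega
  set b : Fin (2*n+1) := ⟨2*i+3, hb⟩ with hbdef
  set a : Fin (2*n+1) := ⟨2*i+2, ha⟩ with hadef
  have hbv : b.1 = 2*i+3 := rfl
  have hav : a.1 = 2*i+2 := rfl
  have h0v : (0 : Fin (2*n+1)).1 = 0 := rfl
  set U : Finset (Fin (2*n+1)) := insert 0 (Finset.Ici b) with hU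
  set T : Finset (Fin (2*n+1)) := Finset.Ici a with hT
  have himg : Finset.image (⇑σ⁻¹) U ⊆ T := by
    intro x hx
    rw [Finset.mem_image] at hx
    obtain ⟨u, hu, rfl⟩ := hx
    rw [hU, Finset.mem_insert] at hu
    rw [hT, Finset.mem_Ici, Fin.le_def, hav]
    rcases hu with rfl | hu
    · omega
    · rw [Finset.mem_Ici, Fin.le_def, hbv] at hu
      have h1 := (hσ u (by omega)).1
      omega
  have h0b : (0 : Fin (2*n+1)) ∉ Finset.Ici b := by
    rw [Finset.mem_Ici, Fin.le_def, hbv, h0v]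
    omega
  have hcard : T.card ≤ (Finset.image (⇑σ⁻¹) U).card := by
    rw [Finset.card_image_of_injective _ σ⁻¹.injective, hU,
      Finset.card_insert_of_notMem h0b, hT, Fin.card_Ici, Fin.card_Ici, hav, hbv]
    omega
  have heq : Finset.image (⇑σ⁻¹) U = T := Finset.eq_of_subset_of_card_le himg hcard
  have haT : a ∈ Finset.image (⇑σ⁻¹) U := by rw [heq, hT]; exact Finset.mem_Ici.2 le_rfl
  rw [Finset.mem_image] at haT
  obtain ⟨u, hu, hua⟩ := haT
  rw [hU, Finset.mem_insert] at hu
  have huav : (σ⁻¹ u).1 = 2*i+2 := by rw [hua, hav]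
  have hune : u ≠ 0 := by
    rintro rfl
    omega
  have hub : 2*i+3 ≤ u.1 := by
    rcases hu with rfl | hu
    · exact absurd rfl hune
    · rw [Finset.mem_Ici, Fin.le_def, hbv] at hu; exact hu
  have hub2 : u.1 ≤ 2*i+4 := by
    have h1 := (hσ u (by omega)).1
    omega
  intro hcon
  have hva : σ⁻¹ v = a := Fin.ext (by rw [hav]; exact hcon)
  have : v = u := σ⁻¹.injective (by rw [hva, hua])
  omega

theorem lemB (n : ℕ) (σ : Equiv.Perm (Fin (2*n+1))) (hσ : Good n σ) (i : ℕ) (hin : i < n)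
    (hi : (σ⁻¹ 0).1 < 2*i) (v : Fin (2*n+1)) (hv : v.1 = 2*i+1 ∨ v.1 = 2*i+2) :
    (σ⁻¹ v).1 ≠ 2*i := by
  have hp := (σ⁻¹ 0).isLt
  have ha : (2*i : ℕ) < 2*n+1 := by omega
  set a : Fin (2*n+1) := ⟨2*i, ha⟩ with hadef
  have hav : a.1 = 2*i := rfl
  have h0v : (0 : Fin (2*n+1)).1 = 0 := rfl
  set U : Finset (Fin (2*n+1)) := Finset.Iic a with hU
  have himg : Finset.image (⇑σ⁻¹) U ⊆ U := by
    intro x hx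
    rw [Finset.mem_image] at hx
    obtain ⟨u, hu, rfl⟩ := hx
    rw [hU, Finset.mem_Iic, Fin.le_def, hav] at hu ⊢
    by_cases hu0 : u.1 = 0
    · have : u = 0 := Fin.ext (by rw [hu0, h0v])
      rw [this]
      omega
    · have h1 := (hσ u (by omega)).2
      omega
  have hcard : U.card ≤ (Finset.image (⇑σ⁻¹) U).card := by
    rw [Finset.card_image_of_injective _ σ⁻¹.injective]
  have heq : Finset.image (⇑σ⁻¹) U = U := Finset.eq_of_subset_of_card_le himg hcard
  have haT : a ∈ Finset.image (⇑σ⁻¹) U := by rw [heq, hU]; exact Finset.mem_Iic.2 le_rfl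
  rw [Finset.mem_image] at haT
  obtain ⟨u, hu, hua⟩ := haT
  have huav : (σ⁻¹ u).1 = 2*i := by rw [hua, hav]
  have hune : u ≠ 0 := by
    rintro rfl
    omega
  have hu0 : 1 ≤ u.1 := by
    rcases Nat.eq_zero_or_pos u.1 with h | h
    · exact absurd (Fin.ext (by rw [h, h0v])) hune
    · exact h
  have hub : 2*i-1 ≤ u.1 := by
    have h1 := (hσ u hu0).2
    omega
  have hub2 : u.1 ≤ 2*i := by
    rw [hU, Finset.mem_Iic, Fin.le_def, hav] at hu; exact hu
  intro hcon
  have hva : σ⁻¹ v = a := Fin.ext (by rw [hav]; exact hcon)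
  have : v = u := σ⁻¹.injective (by rw [hva, hua])
  omega

def Phi (n : ℕ) (p : Fin (2*n+1)) (ε : Fin n → Bool) : Equiv.Perm (Fin (2*n+1)) :=
  wperm n ε * cyc n p

theorem phi_inv_apply (n : ℕ) (p : Fin (2*n+1)) (ε : Fin n → Bool) (v : Fin (2*n+1)) :
    (Phi n p ε)⁻¹ v = (cyc n p).symm (wfun n ε v) := by
  rw [Phi, mul_inv_rev, wperm_inv, Equiv.Perm.mul_apply, wperm_apply]
  rfl

theorem good_phi (n : ℕ) (p : Fin (2*n+1)) (ε : Fin n → Bool) : Good n (Phi n p ε) := by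
  intro v hv
  rw [phi_inv_apply, cyc_symm_apply_val]
  rcases wfun_cases n ε v with h | ⟨h, hpar⟩ | ⟨h, hpar, _⟩ <;>
    · split_ifs <;> omega

theorem phi_inv_zero (n : ℕ) (p : Fin (2*n+1)) (ε : Fin n → Bool) :
    (Phi n p ε)⁻¹ 0 = p := by
  rw [phi_inv_apply, wfun_zero n ε 0 rfl]
  apply Fin.ext
  rw [cyc_symm_apply_val]
  simp

theorem phi_inj (n : ℕ) :
    Function.Injective (fun pe : Fin (2*n+1) × (Fin n → Bool) => Phi n pe.1 pe.2) := by
  rintro ⟨p, ε⟩ ⟨q, δ⟩ h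
  dsimp only at h
  have hpq : p = q := by
    rw [← phi_inv_zero n p ε, ← phi_inv_zero n q δ, h]
  subst hpq
  have hw : wperm n ε = wperm n δ := by
    have := mul_right_cancel (a := wperm n ε) (b := cyc n p) (c := wperm n δ) h
    exact this
  have hε : ε = δ := by
    funext i
    have h1 := congrArg (fun f : Equiv.Perm (Fin (2*n+1)) => f ⟨2*i.1+1, by have := i.2; omega⟩) hw
    rw [wperm_apply, wperm_apply, wfun_odd n ε i.1 i.2, wfun_odd n δ i.1 i.2] at h1
    have h2 := congrArg Fin.val h1
    have key : ε ⟨i.1, i.2⟩ = δ ⟨i.1, i.2⟩ := by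
      cases he1 : ε ⟨i.1, i.2⟩ <;> cases he2 : δ ⟨i.1, i.2⟩ <;>
        rw [he1, he2] at h2 <;> simp at h2 ⊢
    simpa using key
  rw [hε]

theorem wfun_even (n : ℕ) (ε : Fin n → Bool) (j : ℕ) (hj : j < n) :
    wfun n ε ⟨2*j+2, by omega⟩ =
      if ε ⟨j, hj⟩ then ⟨2*j+1, by omega⟩ else ⟨2*j+2, by omega⟩ := by
  rw [wfun]
  have e : ((⟨2*j+2, by omega⟩ : Fin (2*n+1)).1 - 1)/2 = j := by simp; omega
  by_cases hε : ε ⟨j, hj⟩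
  · rw [if_pos ⟨by simp, by rw [e, bext, dif_pos hj, hε]⟩,
      dif_neg (show ¬((⟨2*j+2, by omega⟩ : Fin (2*n+1)).1 % 2 = 1) by simp),
      if_pos hε]
    apply Fin.ext
    simp
  · rw [if_neg, if_neg hε]
    rw [e, bext, dif_pos hj]
    simp [hε]

theorem good_imp (n : ℕ) (σ : Equiv.Perm (Fin (2*n+1))) (hσ : Good n σ) :
    ∃ p ε, σ = Phi n p ε := by
  classical
  set p : Fin (2*n+1) := σ⁻¹ 0 with hp
  set w : Equiv.Perm (Fin (2*n+1)) := cyc n p * σ⁻¹ with hwdef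
  have hwapp : ∀ v, w v = cyc n p (σ⁻¹ v) := fun v => rfl
  have keyW : ∀ (j : ℕ) (hj : j < n) (v : Fin (2*n+1)), (v.1 = 2*j+1 ∨ v.1 = 2*j+2) →
      (w v).1 = 2*j+1 ∨ (w v).1 = 2*j+2 := by
    intro j hj v hv
    have hv1 : 1 ≤ v.1 := by omega
    have hσv := hσ v hv1
    have hj' : (v.1-1)/2 = j := by omega
    rw [hj'] at hσv
    have hne : (σ⁻¹ v).1 ≠ p.1 := by
      intro hc
      have hinj2 : σ⁻¹ v = σ⁻¹ 0 := Fin.ext hc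
      have h3 : v = 0 := σ⁻¹.injective hinj2
      have : v.1 = 0 := by rw [h3]; rfl
      omega
    rw [hwapp, cyc_apply_val]
    rcases Nat.lt_trichotomy (σ⁻¹ v).1 p.1 with hlt | heq | hgt
    · rw [if_pos hlt]
      by_cases hcase : (σ⁻¹ v).1 = 2*j+2
      · exact absurd hcase (lemA n σ hσ j hj (by omega) v hv)
      · omega
    · exact absurd heq hne
    · rw [if_neg (by omega), if_neg (by omega)]
      by_cases hcase : (σ⁻¹ v).1 = 2*j
      · exact absurd hcase (lemB n σ hσ j hj (by omega) v hv)
      · omega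
  set ε : Fin n → Bool := fun i =>
    decide ((w ⟨2*i.1+1, by have := i.2; omega⟩).1 = 2*i.1+2) with hε
  have hweq : w = wperm n ε := by
    apply Equiv.ext
    intro v
    rw [wperm_apply]
    by_cases hv0 : v.1 = 0
    · have hv : v = 0 := Fin.ext (by rw [hv0]; rfl)
      rw [wfun_zero n ε v hv0, hv, hwapp]
      apply Fin.ext
      rw [cyc_apply_val]
      rw [← hp]
      simp
    · have hj : (v.1-1)/2 < n := by have := v.isLt; omega
      set j := (v.1-1)/2 with hjdef
      have hv : v.1 = 2*j+1 ∨ v.1 = 2*j+2 := by omega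
      have hlt1 : 2*j+1 < 2*n+1 := by omega
      have hlt2 : 2*j+2 < 2*n+1 := by omega
      have k1 := keyW j hj ⟨2*j+1, hlt1⟩ (Or.inl rfl)
      have k2 := keyW j hj ⟨2*j+2, hlt2⟩ (Or.inr rfl)
      have hεj : ε ⟨j, hj⟩ = decide ((w ⟨2*j+1, hlt1⟩).1 = 2*j+2) := rfl
      have hwne : w ⟨2*j+2, hlt2⟩ ≠ w ⟨2*j+1, hlt1⟩ := by
        intro hc
        have h1 := congrArg Fin.val (w.injective hc)
        simp at h1
      by_cases hb : (w ⟨2*j+1, hlt1⟩).1 = 2*j+2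
      · have hεt : ε ⟨j, hj⟩ = true := by rw [hεj]; exact decide_eq_true hb
        rcases hv with hv | hv
        · have hvmk : v = ⟨2*j+1, hlt1⟩ := Fin.ext hv
          rw [hvmk, wfun_odd n ε j hj, if_pos hεt]
          exact Fin.ext hb
        · have hvmk : v = ⟨2*j+2, hlt2⟩ := Fin.ext hv
          rw [hvmk, wfun_even n ε j hj, if_pos hεt]
          apply Fin.ext
          rcases k2 with h | h
          · exact h
          · exact absurd (Fin.ext (h.trans hb.symm) : w ⟨2*j+2, hlt2⟩ = w ⟨2*j+1, hlt1⟩) hwne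
      · have hεt : ε ⟨j, hj⟩ = false := by rw [hεj]; exact decide_eq_false hb
        have hwv' : (w ⟨2*j+1, hlt1⟩).1 = 2*j+1 := by
          rcases k1 with h | h
          · exact h
          · exact absurd h hb
        rcases hv with hv | hv
        · have hvmk : v = ⟨2*j+1, hlt1⟩ := Fin.ext hv
          rw [hvmk, wfun_odd n ε j hj, if_neg (by rw [hεt]; simp)]
          exact Fin.ext hwv'
        · have hvmk : v = ⟨2*j+2, hlt2⟩ := Fin.ext hv
          rw [hvmk, wfun_even n ε j hj, if_neg (by rw [hεt]; simp)]
          apply Fin.ext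
          rcases k2 with h | h
          · exact absurd (Fin.ext (h.trans hwv'.symm) : w ⟨2*j+2, hlt2⟩ = w ⟨2*j+1, hlt1⟩) hwne
          · exact h
  refine ⟨p, ε, ?_⟩
  have h' : σ⁻¹ = (cyc n p)⁻¹ * wperm n ε := by
    rw [← hweq, hwdef, inv_mul_cancel_left]
  rw [Phi, ← wperm_inv]
  rw [← inv_inv σ, h', mul_inv_rev, inv_inv]

theorem cond_iff (n : ℕ) (σ : Equiv.Perm (Fin (2 * n + 1))) :
    (∀ i : Fin n,
        ({⟨2 * i.1 + 1, by have := i.2; omega⟩, ⟨2 * i.1 + 2, by have := i.2; omega⟩} :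
            Finset (Fin (2 * n + 1))) ⊆
          {σ ⟨2 * i.1, by have := i.2; omega⟩, σ ⟨2 * i.1 + 1, by have := i.2; omega⟩,
            σ ⟨2 * i.1 + 2, by have := i.2; omega⟩}) ↔ Good n σ := by
  constructor
  · intro h v hv
    obtain ⟨j, hjv, hj⟩ : ∃ j, (v.1-1)/2 = j ∧ j < n := ⟨_, rfl, by have := v.isLt; omega⟩
    rw [hjv]
    have key : ∀ u : Fin (2*n+1),
        u ∈ ({σ ⟨2 * j, by omega⟩, σ ⟨2 * j + 1, by omega⟩, σ ⟨2 * j + 2, by omega⟩} :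
          Finset (Fin (2*n+1))) → 2*j ≤ (σ⁻¹ u).1 ∧ (σ⁻¹ u).1 ≤ 2*j+2 := by
      intro u hu
      simp only [Finset.mem_insert, Finset.mem_singleton] at hu
      rcases hu with rfl | rfl | rfl <;> rw [Equiv.Perm.inv_def, Equiv.symm_apply_apply] <;> simp <;> omega
    have hvmem : v ∈ ({⟨2 * j + 1, by omega⟩, ⟨2 * j + 2, by omega⟩} :
        Finset (Fin (2*n+1))) := by
      simp only [Finset.mem_insert, Finset.mem_singleton, Fin.ext_iff]
      omega
    have := key v (h ⟨j, hj⟩ hvmem)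
    exact this
  · intro h i x hx
    have hx' : x.1 = 2*i.1+1 ∨ x.1 = 2*i.1+2 := by
      simpa only [Finset.mem_insert, Finset.mem_singleton, Fin.ext_iff] using hx
    have h1 := h x (by omega)
    have e : (x.1-1)/2 = i.1 := by omega
    rw [e] at h1
    have h2 : σ⁻¹ x = ⟨2*i.1, by have := i.2; omega⟩ ∨
        σ⁻¹ x = ⟨2*i.1+1, by have := i.2; omega⟩ ∨
        σ⁻¹ x = ⟨2*i.1+2, by have := i.2; omega⟩ := by
      simp only [Fin.ext_iff]
      omega
    simp only [Finset.mem_insert, Finset.mem_singleton]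
    rcases h2 with h2 | h2 | h2
    · left; rw [← h2, Equiv.Perm.inv_def, Equiv.apply_symm_apply]
    · right; left; rw [← h2, Equiv.Perm.inv_def, Equiv.apply_symm_apply]
    · right; right; rw [← h2, Equiv.Perm.inv_def, Equiv.apply_symm_apply]

end CountSuitable

open Classical in
/-- the number of suitable permutations is `2ⁿ(2n+1)`. -/
theorem count_suitable_permutations (n : ℕ) (hn : 1 ≤ n) :
    (Finset.univ.filter fun σ : Equiv.Perm (Fin (2 * n + 1)) =>
        ∀ i : Fin n,
          ({⟨2 * i.1 + 1, by have := i.2; omega⟩, ⟨2 * i.1 + 2, by have := i.2; omega⟩} :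
              Finset (Fin (2 * n + 1))) ⊆
            {σ ⟨2 * i.1, by have := i.2; omega⟩, σ ⟨2 * i.1 + 1, by have := i.2; omega⟩,
              σ ⟨2 * i.1 + 2, by have := i.2; omega⟩}).card
      = 2 ^ n * (2 * n + 1) := by
  classical
  have hset : (Finset.univ.filter fun σ : Equiv.Perm (Fin (2 * n + 1)) =>
        ∀ i : Fin n,
          ({⟨2 * i.1 + 1, by have := i.2; omega⟩, ⟨2 * i.1 + 2, by have := i.2; omega⟩} :
              Finset (Fin (2 * n + 1))) ⊆
            {σ ⟨2 * i.1, by have := i.2; omega⟩, σ ⟨2 * i.1 + 1, by have := i.2; omega⟩,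
              σ ⟨2 * i.1 + 2, by have := i.2; omega⟩})
      = Finset.image
          (fun pe : Fin (2 * n + 1) × (Fin n → Bool) => CountSuitable.Phi n pe.1 pe.2)
          Finset.univ := by
    ext σ
    simp only [Finset.mem_filter, Finset.mem_univ, true_and, Finset.mem_image]
    constructor
    · intro hσ
      obtain ⟨p, ε, hpe⟩ := CountSuitable.good_imp n σ ((CountSuitable.cond_iff n σ).1 hσ)
      exact ⟨(p, ε), hpe.symm⟩
    · rintro ⟨⟨p, ε⟩, rfl⟩
      exact (CountSuitable.cond_iff n _).2 (CountSuitable.good_phi n p ε)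
  rw [hset, Finset.card_image_of_injective _ (CountSuitable.phi_inj n), Finset.card_univ]
  simp only [Fintype.card_prod, Fintype.card_fin, Fintype.card_fun, Fintype.card_bool]
  ring
end
end

section
/- For every nonzero integer k, one has 2 ∫_{(S¹)³} e(θ₀,θ₁,θ₂) cos(kθ₁) sin(kθ₂) dθ₀ dθ₁ dθ₂ = 1/(kπ), the integral being taken with respect to the normalized probability measure on each circle factor. -/
open MeasureTheory Real
open scoped Real

noncomputable section

lemma sbtw_coe_iff {x y z : ℝ} :
    sbtw (x : Circle2pi) (y : Circle2pi) (z : Circle2pi) ↔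
      toIocMod Real.two_pi_pos 0 (y - x) < toIcoMod Real.two_pi_pos 0 (z - x) := by
  constructor
  · intro h
    have h' : sbtw (y : Circle2pi) (z : Circle2pi) (x : Circle2pi) := h.cyclic_left
    rw [sbtw_iff_not_btw] at h'
    -- btw x z y
    rw [QuotientAddGroup.btw_coe_iff'] at h'
    push_neg at h'
    exact h'
  · intro h
    have h' : ¬ Btw.btw (x : Circle2pi) (z : Circle2pi) (y : Circle2pi) := by
      rw [QuotientAddGroup.btw_coe_iff']
      push_neg
      exact h
    rw [← sbtw_iff_not_btw] at h'
    exact h'.cyclic_right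

/-- representative in (0, 2π] -/
def Frep (q : Circle2pi) : ℝ := (AddCircle.equivIoc (2*π) 0 q : ℝ)
/-- representative in [0, 2π) -/
def Grep (q : Circle2pi) : ℝ := (AddCircle.equivIco (2*π) 0 q : ℝ)

lemma Frep_coe (x : ℝ) : Frep (x : Circle2pi) = toIocMod Real.two_pi_pos 0 x := by
  simp [Frep, AddCircle.equivIoc, QuotientAddGroup.equivIocMod_coe]

lemma Grep_coe (x : ℝ) : Grep (x : Circle2pi) = toIcoMod Real.two_pi_pos 0 x := by
  simp [Grep, AddCircle.equivIco, QuotientAddGroup.equivIcoMod_coe]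

lemma Frep_mem (q : Circle2pi) : Frep q ∈ Set.Ioc 0 (2*π) := by
  have := (AddCircle.equivIoc (2*π) 0 q).2
  simpa [Frep] using this

lemma sbtw_iff_rep (a b c : Circle2pi) : sbtw a b c ↔ Frep (c - b) < Grep (a - b) := by
  induction a using QuotientAddGroup.induction_on with | H x =>
  induction b using QuotientAddGroup.induction_on with | H y =>
  induction c using QuotientAddGroup.induction_on with | H z =>
  have h1 : sbtw (x : Circle2pi) (y:Circle2pi) (z:Circle2pi) ↔ sbtw (y : Circle2pi) (z:Circle2pi) (x:Circle2pi) :=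
    ⟨fun h => h.cyclic_left, fun h => h.cyclic_right⟩
  rw [h1, sbtw_coe_iff]
  have e1 : ((z : Circle2pi) - (y:Circle2pi)) = ((z - y : ℝ) : Circle2pi) := (QuotientAddGroup.mk_sub _ _ _).symm
  have e2 : ((x : Circle2pi) - (y:Circle2pi)) = ((x - y : ℝ) : Circle2pi) := (QuotientAddGroup.mk_sub _ _ _).symm
  rw [e1, e2, Frep_coe, Grep_coe]

lemma eCocycle_eq_s9 (a b c : Circle2pi) :
    eCocycle a b c = if Frep (c - b) < Grep (a - b) then 1 else -1 := by
  rw [eCocycle]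
  simp only [sbtw_iff_rep]

lemma measurable_Frep : Measurable Frep :=
  measurable_subtype_coe.comp (AddCircle.measurableEquivIoc (2*π) 0).measurable

lemma measurable_Grep : Measurable Grep :=
  measurable_subtype_coe.comp (AddCircle.measurableEquivIco (2*π) 0).measurable

lemma measurable_eCocycle : Measurable (fun p : Circle2pi × Circle2pi × Circle2pi =>
    eCocycle p.1 p.2.1 p.2.2) := by
  simp only [eCocycle_eq_s9]
  exact Measurable.ite
    (measurableSet_lt (measurable_Frep.comp ((measurable_snd.comp measurable_snd).sub (measurable_fst.comp measurable_snd)))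
      (measurable_Grep.comp (measurable_fst.sub (measurable_fst.comp measurable_snd))))
    measurable_const measurable_const

lemma circle_integral_eq (f : Circle2pi → ℝ) (t : ℝ) :
    ∫ q, f q ∂circleMeasure = (2*π)⁻¹ * ∫ x in t..t + 2*π, f ↑x := by
  rw [AddCircle.intervalIntegral_preimage (2*π) t f, AddCircle.volume_eq_smul_haarAddCircle,
    integral_smul_measure, ENNReal.toReal_ofReal Real.two_pi_pos.le, smul_eq_mul,
    ← mul_assoc, inv_mul_cancel₀ (ne_of_gt Real.two_pi_pos), one_mul]

lemma step_monotone (s : ℝ) : Monotone (fun x : ℝ => if s < x then (1:ℝ) else -1) := by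
  intro x y hxy
  dsimp only
  split_ifs with h1 h2 <;> norm_num
  exact absurd (lt_of_lt_of_le h1 hxy) h2

lemma inner_e (b c : Circle2pi) :
    ∫ a, eCocycle a b c ∂circleMeasure = 1 - Frep (c - b) / π := by
  induction b using QuotientAddGroup.induction_on with | H b₀ =>
  induction c using QuotientAddGroup.induction_on with | H c₀ =>
  set T : ℝ := Frep (((c₀ : Circle2pi)) - (b₀ : Circle2pi)) with hTdef
  have hTmem : T ∈ Set.Ioc 0 (2*π) := Frep_mem _
  rw [circle_integral_eq _ b₀]
  have key : ∫ x in b₀..b₀ + 2*π, eCocycle ↑x ↑b₀ ↑c₀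
      = ∫ x in b₀..b₀ + 2*π, (if b₀ + T < x then (1:ℝ) else -1) := by
    apply intervalIntegral.integral_congr_ae
    have hae : ∀ᵐ x : ℝ, x ≠ b₀ + 2*π := by
      refine ae_iff.mpr ?_
      simpa using measure_singleton (b₀ + 2*π)
    filter_upwards [hae] with x hx hmem
    rw [Set.uIoc_of_le (by linarith [Real.two_pi_pos] : b₀ ≤ b₀ + 2*π)] at hmem
    have hxIoo : x ∈ Set.Ioo b₀ (b₀ + 2*π) := ⟨hmem.1, lt_of_le_of_ne hmem.2 hx⟩
    rw [eCocycle_eq_s9]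
    have hg : Grep ((x : Circle2pi) - (b₀ : Circle2pi)) = x - b₀ := by
      rw [(QuotientAddGroup.mk_sub _ _ _).symm, Grep_coe]
      rw [toIcoMod_eq_self]
      constructor <;> [linarith [hxIoo.1]; linarith [hxIoo.2]]
    rw [hg, ← hTdef]
    by_cases h : T < x - b₀
    · rw [if_pos h, if_pos (by linarith)]
    · rw [if_neg h, if_neg (by intro h'; exact h (by linarith))]
  rw [key]
  have hsplit : ∫ x in b₀..b₀ + 2*π, (if b₀ + T < x then (1:ℝ) else -1)
      = (∫ x in b₀..b₀ + T, (if b₀ + T < x then (1:ℝ) else -1))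
        + ∫ x in b₀ + T..b₀ + 2*π, (if b₀ + T < x then (1:ℝ) else -1) := by
    exact (intervalIntegral.integral_add_adjacent_intervals
      ((step_monotone (b₀ + T)).intervalIntegrable)
      ((step_monotone (b₀ + T)).intervalIntegrable)).symm
  have h1 : ∫ x in b₀..b₀ + T, (if b₀ + T < x then (1:ℝ) else -1) = -T := by
    rw [intervalIntegral.integral_congr (g := fun _ => (-1:ℝ))]
    · simp
    · intro x hx
      rw [Set.uIcc_of_le (by linarith [hTmem.1])] at hx
      exact if_neg (not_lt.mpr hx.2)
  have h2 : ∫ x in b₀ + T..b₀ + 2*π, (if b₀ + T < x then (1:ℝ) else -1) = 2*π - T := by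
    have : ∫ x in b₀ + T..b₀ + 2*π, (if b₀ + T < x then (1:ℝ) else -1)
        = ∫ x in b₀ + T..b₀ + 2*π, (1:ℝ) := by
      apply intervalIntegral.integral_congr_ae
      have hae : ∀ᵐ x : ℝ, x ≠ b₀ + T := by
        refine ae_iff.mpr ?_
        simpa using measure_singleton (b₀ + T)
      filter_upwards [hae] with x hx hmem
      rw [Set.uIoc_of_le (by linarith [hTmem.2])] at hmem
      exact if_pos (lt_of_le_of_ne hmem.1.le (Ne.symm hx))
    rw [this]; simp
  rw [hsplit, h1, h2]
  have hπ : π ≠ 0 := Real.pi_ne_zero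
  field_simp
  ring

lemma angle_sin_zsmul_coe (k : ℤ) (x : ℝ) :
    Real.Angle.sin (k • ((x : ℝ) : Circle2pi)) = Real.sin ((k : ℝ) * x) := by
  rw [← AddCircle.coe_zsmul, zsmul_eq_mul]
  exact Real.Angle.sin_coe _

lemma angle_cos_zsmul_coe (k : ℤ) (x : ℝ) :
    Real.Angle.cos (k • ((x : ℝ) : Circle2pi)) = Real.cos ((k : ℝ) * x) := by
  rw [← AddCircle.coe_zsmul, zsmul_eq_mul]
  exact Real.Angle.cos_coe _

lemma middle_integral (k : ℤ) (hk : k ≠ 0) (b : Circle2pi) :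
    ∫ c, (1 - Frep (c - b) / π) * Real.Angle.sin (k • c) ∂circleMeasure
      = 2 * Real.Angle.cos (k • b) / (2 * π * k) := by
  induction b using QuotientAddGroup.induction_on with | H b₀ =>
  rw [circle_integral_eq _ b₀]
  have hkR : (k : ℝ) ≠ 0 := Int.cast_ne_zero.mpr hk
  have hπ : π ≠ 0 := Real.pi_ne_zero
  have key : ∫ x in b₀..b₀ + 2*π, (1 - Frep ((x : Circle2pi) - (b₀ : Circle2pi)) / π)
        * Real.Angle.sin (k • ((x:ℝ) : Circle2pi))
      = ∫ x in b₀..b₀ + 2*π, (1 - (x - b₀) / π) * Real.sin ((k:ℝ) * x) := by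
    apply intervalIntegral.integral_congr_ae
    refine Filter.Eventually.of_forall (fun x hmem => ?_)
    rw [Set.uIoc_of_le (by linarith [Real.two_pi_pos] : b₀ ≤ b₀ + 2*π)] at hmem
    rw [angle_sin_zsmul_coe, (QuotientAddGroup.mk_sub _ _ _).symm, Frep_coe,
      (toIocMod_eq_self _).mpr ⟨by linarith [hmem.1], by linarith [hmem.2]⟩]
  rw [key]
  have deriv : ∀ x ∈ Set.uIcc b₀ (b₀ + 2*π),
      HasDerivAt (fun y => -((1 - (y - b₀)/π) * Real.cos ((k:ℝ)*y)) / k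
          - Real.sin ((k:ℝ)*y) / (π * k^2))
        ((1 - (x - b₀) / π) * Real.sin ((k:ℝ) * x)) x := by
    intro x _
    have hcos : HasDerivAt (fun y : ℝ => Real.cos ((k:ℝ)*y)) (-Real.sin ((k:ℝ)*x) * (k:ℝ)) x := by
      simpa [Function.comp_def] using (Real.hasDerivAt_cos ((k:ℝ)*x)).comp x ((hasDerivAt_id x).const_mul (k:ℝ))
    have hsin : HasDerivAt (fun y : ℝ => Real.sin ((k:ℝ)*y)) (Real.cos ((k:ℝ)*x) * (k:ℝ)) x := by
      simpa [Function.comp_def] using (Real.hasDerivAt_sin ((k:ℝ)*x)).comp x ((hasDerivAt_id x).const_mul (k:ℝ))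
    have hu : HasDerivAt (fun y : ℝ => 1 - (y - b₀)/π) (-(1/π)) x := by
      simpa using (((hasDerivAt_id x).sub_const b₀).div_const π).const_sub 1
    have h1 := ((hu.mul hcos).neg.div_const (k:ℝ)).sub (hsin.div_const (π * (k:ℝ)^2))
    refine h1.congr_deriv (Eq.symm ?_)
    field_simp
    ring
  rw [intervalIntegral.integral_eq_sub_of_hasDerivAt deriv (by
    apply Continuous.intervalIntegrable
    continuity)]
  have hc : Real.cos ((k:ℝ) * (b₀ + 2*π)) = Real.cos ((k:ℝ) * b₀) := by
    have : (k:ℝ) * (b₀ + 2*π) = (k:ℝ) * b₀ + (k:ℤ) * (2*π) := by push_cast; ring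
    rw [this, Real.cos_add_int_mul_two_pi]
  have hs : Real.sin ((k:ℝ) * (b₀ + 2*π)) = Real.sin ((k:ℝ) * b₀) := by
    have : (k:ℝ) * (b₀ + 2*π) = (k:ℝ) * b₀ + (k:ℤ) * (2*π) := by push_cast; ring
    rw [this, Real.sin_add_int_mul_two_pi]
  rw [hc, hs, angle_cos_zsmul_coe]
  field_simp
  ring

lemma cos_sq_integral (k : ℤ) (hk : k ≠ 0) :
    ∫ b, Real.Angle.cos (k • b) ^ 2 ∂circleMeasure = 1 / 2 := by
  rw [circle_integral_eq _ 0]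
  have hkR : (k : ℝ) ≠ 0 := Int.cast_ne_zero.mpr hk
  have key : ∫ x in (0:ℝ)..0 + 2*π, Real.Angle.cos (k • ((x:ℝ) : Circle2pi)) ^ 2
      = ∫ x in (0:ℝ)..0 + 2*π, Real.cos ((k:ℝ)*x) ^ 2 := by
    apply intervalIntegral.integral_congr
    intro x _
    simp only [angle_cos_zsmul_coe]
  rw [key]
  have deriv : ∀ x ∈ Set.uIcc (0:ℝ) (0 + 2*π),
      HasDerivAt (fun y => y/2 + Real.sin (2*(k:ℝ)*y) / (4*(k:ℝ)))
        (Real.cos ((k:ℝ)*x) ^ 2) x := by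
    intro x _
    have hsin : HasDerivAt (fun y : ℝ => Real.sin (2*(k:ℝ)*y)) (Real.cos (2*(k:ℝ)*x) * (2*(k:ℝ))) x := by
      simpa [Function.comp_def] using (Real.hasDerivAt_sin (2*(k:ℝ)*x)).comp x ((hasDerivAt_id x).const_mul (2*(k:ℝ)))
    have h1 := ((hasDerivAt_id x).div_const 2).add (hsin.div_const (4*(k:ℝ)))
    refine h1.congr_deriv (Eq.symm ?_)
    have : Real.cos ((k:ℝ)*x) ^ 2 = 1/2 + Real.cos (2*((k:ℝ)*x))/2 := Real.cos_sq _
    rw [this]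
    have : 2*((k:ℝ)*x) = 2*(k:ℝ)*x := by ring
    rw [this]
    field_simp
    ring
  rw [intervalIntegral.integral_eq_sub_of_hasDerivAt deriv (by
    apply Continuous.intervalIntegrable
    continuity)]
  have hs : Real.sin (2*(k:ℝ)*(0 + 2*π)) = 0 := by
    have : 2*(k:ℝ)*(0 + 2*π) = 0 + (2*k : ℤ) * (2*π) := by push_cast; ring
    rw [this, Real.sin_add_int_mul_two_pi, Real.sin_zero]
  rw [hs]
  simp
  field_simp

lemma abs_eCocycle_le (a b c : Circle2pi) : |eCocycle a b c| ≤ 1 := by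
  rw [eCocycle]
  split_ifs <;> simp

lemma abs_angle_cos_le (q : Real.Angle) : |Real.Angle.cos q| ≤ 1 := by
  induction q using Real.Angle.induction_on
  rw [Real.Angle.cos_coe]
  exact Real.abs_cos_le_one _

lemma abs_angle_sin_le (q : Real.Angle) : |Real.Angle.sin q| ≤ 1 := by
  induction q using Real.Angle.induction_on
  rw [Real.Angle.sin_coe]
  exact Real.abs_sin_le_one _

lemma measurable_cos_zsmul (k : ℤ) : Measurable (fun q : Circle2pi => Real.Angle.cos (k • q)) := by
  have hc : Continuous (fun q : Circle2pi => Real.Angle.cos (k • q)) :=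
    Real.Angle.continuous_cos.comp (continuous_zsmul k)
  exact hc.measurable

lemma measurable_sin_zsmul (k : ℤ) : Measurable (fun q : Circle2pi => Real.Angle.sin (k • q)) := by
  have hc : Continuous (fun q : Circle2pi => Real.Angle.sin (k • q)) :=
    Real.Angle.continuous_sin.comp (continuous_zsmul k)
  exact hc.measurable

/-- `2 ∫ e(θ₀,θ₁,θ₂) cos(kθ₁) sin(kθ₂) = 1/(kπ)`. -/
theorem euler_cos_sin_value (k : ℤ) (hk : k ≠ 0) :
    2 * ∫ p : Circle2pi × Circle2pi × Circle2pi,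
        eCocycle p.1 p.2.1 p.2.2 * Real.Angle.cos (k • p.2.1) * Real.Angle.sin (k • p.2.2)
      ∂(circleMeasure.prod (circleMeasure.prod circleMeasure))
      = 1 / ((k : ℝ) * π) := by
  have hkR : (k : ℝ) ≠ 0 := Int.cast_ne_zero.mpr hk
  have hπ : π ≠ 0 := Real.pi_ne_zero
  -- integrability of the full integrand
  have hmeasf : Measurable (fun p : Circle2pi × Circle2pi × Circle2pi =>
      eCocycle p.1 p.2.1 p.2.2 * Real.Angle.cos (k • p.2.1) * Real.Angle.sin (k • p.2.2)) :=
    (measurable_eCocycle.mul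
      ((measurable_cos_zsmul k).comp (measurable_fst.comp measurable_snd))).mul
      ((measurable_sin_zsmul k).comp (measurable_snd.comp measurable_snd))
  have hintf : Integrable (fun p : Circle2pi × Circle2pi × Circle2pi =>
      eCocycle p.1 p.2.1 p.2.2 * Real.Angle.cos (k • p.2.1) * Real.Angle.sin (k • p.2.2))
      (circleMeasure.prod (circleMeasure.prod circleMeasure)) := by
    refine (integrable_const (1:ℝ)).mono' hmeasf.aestronglyMeasurable (ae_of_all _ fun p => ?_)
    rw [Real.norm_eq_abs, abs_mul, abs_mul]
    calc |eCocycle p.1 p.2.1 p.2.2| * |Real.Angle.cos (k • p.2.1)| * |Real.Angle.sin (k • p.2.2)|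
        ≤ 1 * 1 * 1 := by
          gcongr
          · exact abs_eCocycle_le _ _ _
          · exact abs_angle_cos_le _
          · exact abs_angle_sin_le _
      _ = 1 := by norm_num
  rw [MeasureTheory.integral_prod_symm _ hintf]
  -- inner integral over θ₀
  have step1 : ∀ q : Circle2pi × Circle2pi,
      (∫ a, eCocycle a q.1 q.2 * Real.Angle.cos (k • q.1) * Real.Angle.sin (k • q.2)
        ∂circleMeasure)
      = (1 - Frep (q.2 - q.1) / π) * Real.Angle.cos (k • q.1) * Real.Angle.sin (k • q.2) := by
    intro q
    rw [MeasureTheory.integral_mul_const, MeasureTheory.integral_mul_const, inner_e]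
  simp_rw [step1]
  -- Fubini on the remaining double integral
  have hmeasg : Measurable (fun q : Circle2pi × Circle2pi =>
      (1 - Frep (q.2 - q.1) / π) * Real.Angle.cos (k • q.1) * Real.Angle.sin (k • q.2)) := by
    refine ((measurable_const.sub ((measurable_Frep.comp
      (measurable_snd.sub measurable_fst)).div_const π)).mul
      ((measurable_cos_zsmul k).comp measurable_fst)).mul
      ((measurable_sin_zsmul k).comp measurable_snd)
  have hintg : Integrable (fun q : Circle2pi × Circle2pi =>
      (1 - Frep (q.2 - q.1) / π) * Real.Angle.cos (k • q.1) * Real.Angle.sin (k • q.2))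
      (circleMeasure.prod circleMeasure) := by
    refine (integrable_const (3:ℝ)).mono' hmeasg.aestronglyMeasurable (ae_of_all _ fun q => ?_)
    rw [Real.norm_eq_abs, abs_mul, abs_mul]
    have hF := Frep_mem (q.2 - q.1)
    have h1 : |1 - Frep (q.2 - q.1) / π| ≤ 3 := by
      rw [abs_le]
      constructor
      · have : Frep (q.2 - q.1) / π ≤ 2 := by
          rw [div_le_iff₀ Real.pi_pos]
          linarith [hF.2]
        linarith
      · have : 0 ≤ Frep (q.2 - q.1) / π := div_nonneg hF.1.le Real.pi_pos.le
        linarith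
    calc |1 - Frep (q.2 - q.1) / π| * |Real.Angle.cos (k • q.1)| * |Real.Angle.sin (k • q.2)|
        ≤ 3 * 1 * 1 := by
          gcongr
          · exact abs_angle_cos_le _
          · exact abs_angle_sin_le _
      _ = 3 := by norm_num
  rw [MeasureTheory.integral_prod _ hintg]
  -- integral over θ₂
  have step2 : ∀ b : Circle2pi,
      (∫ c, (1 - Frep (c - b) / π) * Real.Angle.cos (k • b) * Real.Angle.sin (k • c)
        ∂circleMeasure)
      = Real.Angle.cos (k • b) ^ 2 * (2 / (2 * π * k)) := by
    intro b
    have : ∀ c : Circle2pi,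
        (1 - Frep (c - b) / π) * Real.Angle.cos (k • b) * Real.Angle.sin (k • c)
        = ((1 - Frep (c - b) / π) * Real.Angle.sin (k • c)) * Real.Angle.cos (k • b) := by
      intro c; ring
    simp_rw [this]
    rw [MeasureTheory.integral_mul_const, middle_integral k hk b]
    ring
  simp_rw [step2]
  rw [MeasureTheory.integral_mul_const, cos_sq_integral k hk]
  field_simp
end
end

section
/- Let k₀, k₁, k₂ be nonzero integers and let γ₀, γ₁, γ₂ be functions each equal to cos or to sin. Then ∫_{(S¹)³} e(θ₀,θ₁,θ₂) γ₀(k₀θ₀) γ₁(k₁θ₁) γ₂(k₂θ₂) dθ₀ dθ₁ dθ₂ = 0. -/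
open MeasureTheory Real
open scoped Real

noncomputable section

open MeasureTheory Real Set

namespace EulerAux

/-! ### Basic integral transfer and no-atoms -/

lemma haar_int (f : Circle2pi → ℝ) (t : ℝ) :
    ∫ θ, f θ ∂circleMeasure = (2 * π)⁻¹ * ∫ x in t..(t + 2 * π), f x := by
  have h := AddCircle.intervalIntegral_preimage (2 * π) t f
  rw [AddCircle.volume_eq_smul_haarAddCircle (T := 2 * π), integral_smul_measure,
    ENNReal.toReal_ofReal Real.two_pi_pos.le, smul_eq_mul] at h
  rw [h, ← mul_assoc, inv_mul_cancel₀ Real.two_pi_pos.ne', one_mul]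

lemma haar_singleton (x : Circle2pi) : circleMeasure {x} = 0 := by
  obtain ⟨t, rfl⟩ := QuotientAddGroup.mk_surjective x
  have hcnt : (Set.Countable ((fun y : ℝ => (y : Circle2pi)) ⁻¹' {(t : Circle2pi)})) := by
    have hs : ((fun y : ℝ => (y : Circle2pi)) ⁻¹' {(t : Circle2pi)}) ⊆
        Set.range (fun n : ℤ => t + n • (2 * π)) := by
      intro y hy
      simp only [Set.mem_preimage, Set.mem_singleton_iff] at hy
      have h2 : (y - t : ℝ) ∈ AddSubgroup.zmultiples (2 * π) :=
        QuotientAddGroup.eq_iff_sub_mem.mp hy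
      obtain ⟨n, hn⟩ := h2
      exact ⟨n, by simp at hn ⊢; linarith [hn]⟩
    exact Set.Countable.mono hs (Set.countable_range _)
  have hvol : (volume : Measure Circle2pi) {(t : Circle2pi)} = 0 := by
    have h := (AddCircle.measurePreserving_mk (2 * π) 0).measure_preimage
      (measurableSet_singleton ((t : ℝ) : Circle2pi)).nullMeasurableSet
    rw [← h]
    exact le_antisymm (le_trans (Measure.restrict_apply_le _ _) (hcnt.measure_zero _).le)
      zero_le
  rw [AddCircle.volume_eq_smul_haarAddCircle (T := 2 * π)] at hvol
  simp only [Measure.smul_apply, smul_eq_mul] at hvol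
  rcases mul_eq_zero.mp hvol with h | h
  · exact absurd h (by simp [ENNReal.ofReal_eq_zero, not_le]; positivity)
  · exact h

instance : NullSingletonClass circleMeasure := ⟨haar_singleton⟩

/-! ### Trig functions on the circle -/

lemma zsmul_coe (k : ℤ) (x : ℝ) : (k • ((x : ℝ) : Circle2pi)) = (((k : ℝ) * x : ℝ) : Circle2pi) :=
  (Real.Angle.intCast_mul_eq_zsmul x k).symm

lemma angle_cos_coe (x : ℝ) : Real.Angle.cos ((x : ℝ) : Circle2pi) = Real.cos x := rfl
lemma angle_sin_coe (x : ℝ) : Real.Angle.sin ((x : ℝ) : Circle2pi) = Real.sin x := rfl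

lemma abs_angle_sin_le (θ : Circle2pi) : |Real.Angle.sin θ| ≤ 1 := by
  induction θ using QuotientAddGroup.induction_on
  exact abs_le.mpr ⟨Real.neg_one_le_sin _, Real.sin_le_one _⟩

lemma abs_angle_cos_le (θ : Circle2pi) : |Real.Angle.cos θ| ≤ 1 := by
  induction θ using QuotientAddGroup.induction_on
  exact abs_le.mpr ⟨Real.neg_one_le_cos _, Real.cos_le_one _⟩

lemma gamma_props (k : ℤ) (γ : Circle2pi → ℝ)
    (hγ : γ = Real.Angle.cos ∨ γ = Real.Angle.sin) :
    Continuous (fun θ => γ (k • θ)) ∧ (∀ θ, |γ (k • θ)| ≤ 1) := by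
  rcases hγ with rfl | rfl
  · exact ⟨Real.Angle.continuous_cos.comp (continuous_zsmul k),
      fun θ => abs_angle_cos_le _⟩
  · exact ⟨Real.Angle.continuous_sin.comp (continuous_zsmul k),
      fun θ => abs_angle_sin_le _⟩

lemma exists_antideriv (k : ℤ) (hk : k ≠ 0) (γ : Circle2pi → ℝ)
    (hγ : γ = Real.Angle.cos ∨ γ = Real.Angle.sin) :
    ∃ H : Circle2pi → ℝ, Continuous H ∧ (∀ θ, |H θ| ≤ 1) ∧
      ∀ a b : ℝ, ∫ x in a..b, γ (k • ((x : ℝ) : Circle2pi)) =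
        H ((b : ℝ) : Circle2pi) - H ((a : ℝ) : Circle2pi) := by
  have hk' : (k : ℝ) ≠ 0 := Int.cast_ne_zero.mpr hk
  have hk1 : (1 : ℝ) ≤ |(k : ℝ)| := by
    rw [← Int.cast_abs]; exact_mod_cast Int.one_le_abs hk
  have hinv : |(k : ℝ)⁻¹| ≤ 1 := by
    rw [abs_inv, inv_le_one_iff₀]; right; exact hk1
  rcases hγ with rfl | rfl
  · refine ⟨fun θ => (k : ℝ)⁻¹ * Real.Angle.sin (k • θ), ?_, ?_, ?_⟩
    · exact continuous_const.mul (Real.Angle.continuous_sin.comp (continuous_zsmul k))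
    · intro θ
      rw [abs_mul]
      calc |(k:ℝ)⁻¹| * |Real.Angle.sin (k • θ)| ≤ 1 * 1 :=
            mul_le_mul hinv (abs_angle_sin_le _) (abs_nonneg _) zero_le_one
        _ = 1 := by ring
    · intro a b
      simp only [zsmul_coe, angle_sin_coe, angle_cos_coe]
      rw [intervalIntegral.integral_comp_mul_left (fun y => Real.cos y) hk',
        integral_cos, smul_eq_mul]
      ring
  · refine ⟨fun θ => -((k : ℝ)⁻¹ * Real.Angle.cos (k • θ)), ?_, ?_, ?_⟩
    · exact (continuous_const.mul (Real.Angle.continuous_cos.comp (continuous_zsmul k))).neg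
    · intro θ
      rw [abs_neg, abs_mul]
      calc |(k:ℝ)⁻¹| * |Real.Angle.cos (k • θ)| ≤ 1 * 1 :=
            mul_le_mul hinv (abs_angle_cos_le _) (abs_nonneg _) zero_le_one
        _ = 1 := by ring
    · intro a b
      simp only [zsmul_coe, angle_sin_coe, angle_cos_coe]
      rw [intervalIntegral.integral_comp_mul_left (fun y => Real.sin y) hk',
        integral_sin, smul_eq_mul]
      ring

lemma trig_zero (k : ℤ) (hk : k ≠ 0) (γ : Circle2pi → ℝ)
    (hγ : γ = Real.Angle.cos ∨ γ = Real.Angle.sin) :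
    ∫ θ, γ (k • θ) ∂circleMeasure = 0 := by
  obtain ⟨H, -, -, hH⟩ := exists_antideriv k hk γ hγ
  rw [haar_int (fun θ => γ (k • θ)) 0, hH 0 (0 + 2 * π)]
  have : ((0 + 2 * π : ℝ) : Circle2pi) = ((0 : ℝ) : Circle2pi) := by
    rw [zero_add]
    simp
  rw [this]
  ring

/-! ### sbtw on the circle via representatives -/

lemma sbtw_coe_iff {t₀ d x : ℝ} (htd : t₀ < d) (hd : d < t₀ + 2 * π)
    (hx₁ : t₀ < x) (hx₂ : x ≤ t₀ + 2 * π) :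
    sbtw ((t₀ : ℝ) : Circle2pi) ((x : ℝ) : Circle2pi) ((d : ℝ) : Circle2pi) ↔ x < d := by
  have hp : (0 : ℝ) < 2 * π := Real.two_pi_pos
  rcases eq_or_lt_of_le hx₂ with rfl | hx₂'
  · have hcoe : ((t₀ + 2 * π : ℝ) : Circle2pi) = ((t₀ : ℝ) : Circle2pi) :=
      AddCircle.coe_add_period (2 * π) t₀
    rw [hcoe]
    simp only [sbtw_irrefl_left, false_iff, not_lt]
    linarith
  · rw [sbtw_iff_btw_not_btw, QuotientAddGroup.btw_coe_iff, QuotientAddGroup.btw_coe_iff]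
    have h1 : toIcoMod hp t₀ x = x := (toIcoMod_eq_self hp).mpr ⟨hx₁.le, hx₂'⟩
    have h2 : toIocMod hp t₀ d = d := (toIocMod_eq_self hp).mpr ⟨htd, hd.le⟩
    have h3 : toIocMod hp d t₀ = t₀ + 2 * π := by
      rw [← toIocMod_add_right hp]
      exact (toIocMod_eq_self hp).mpr ⟨hd, by linarith⟩
    rcases lt_or_ge x d with hxd | hdx
    · have h4 : toIcoMod hp d x = x + 2 * π := by
        rw [← toIcoMod_add_right hp]
        exact (toIcoMod_eq_self hp).mpr ⟨by linarith, by linarith⟩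
      rw [h1, h2, h3, h4]
      constructor
      · intro _; exact hxd
      · intro _; exact ⟨hxd.le, by intro h; linarith⟩
    · have h4 : toIcoMod hp d x = x := (toIcoMod_eq_self hp).mpr ⟨hdx, by linarith⟩
      rw [h1, h2, h3, h4]
      constructor
      · rintro ⟨-, hc⟩; exact absurd hx₂ hc
      · intro h; linarith

/-! ### Measurability -/

lemma measurable_icoRep :
    Measurable (fun θ : Circle2pi => ((AddCircle.equivIco (2 * π) 0 θ : Ico (0:ℝ) (0 + 2 * π)) : ℝ)) :=
  measurable_subtype_coe.comp (AddCircle.measurableEquivIco (2 * π) 0).measurable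

lemma measurable_iocRep :
    Measurable (fun θ : Circle2pi => ((AddCircle.equivIoc (2 * π) 0 θ : Ioc (0:ℝ) (0 + 2 * π)) : ℝ)) :=
  measurable_subtype_coe.comp (AddCircle.measurableEquivIoc (2 * π) 0).measurable

lemma measurableSet_btw3 :
    MeasurableSet {p : Circle2pi × Circle2pi × Circle2pi | btw p.1 p.2.1 p.2.2} := by
  have hiff : ∀ a b c : Circle2pi, btw a b c ↔
      ((AddCircle.equivIco (2 * π) 0 (b - a) : Ico (0:ℝ) (0 + 2 * π)) : ℝ) ≤
      ((AddCircle.equivIoc (2 * π) 0 (c - a) : Ioc (0:ℝ) (0 + 2 * π)) : ℝ) :=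
    fun a b c => Iff.rfl
  simp only [hiff]
  exact measurableSet_le
    (measurable_icoRep.comp ((measurable_snd.fst).sub measurable_fst))
    (measurable_iocRep.comp ((measurable_snd.snd).sub measurable_fst))

lemma measurableSet_sbtw3 :
    MeasurableSet {p : Circle2pi × Circle2pi × Circle2pi | sbtw p.1 p.2.1 p.2.2} := by
  have : {p : Circle2pi × Circle2pi × Circle2pi | sbtw p.1 p.2.1 p.2.2} =
      {p : Circle2pi × Circle2pi × Circle2pi | btw p.1 p.2.1 p.2.2} ∩
      ((fun p : Circle2pi × Circle2pi × Circle2pi => (p.2.2, p.2.1, p.1)) ⁻¹'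
        {p : Circle2pi × Circle2pi × Circle2pi | btw p.1 p.2.1 p.2.2})ᶜ := by
    ext p
    simp only [Set.mem_setOf_eq, Set.mem_inter_iff, Set.mem_compl_iff, Set.mem_preimage,
      sbtw_iff_btw_not_btw]
  rw [this]
  exact measurableSet_btw3.inter
    ((measurableSet_btw3.preimage
      ((measurable_snd.snd).prodMk ((measurable_snd.fst).prodMk measurable_fst))).compl)

lemma measurableSet_sbtw_section (a c : Circle2pi) :
    MeasurableSet {b : Circle2pi | sbtw a b c} := by
  have : {b : Circle2pi | sbtw a b c} =
      (fun b : Circle2pi => (a, b, c)) ⁻¹'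
        {p : Circle2pi × Circle2pi × Circle2pi | sbtw p.1 p.2.1 p.2.2} := rfl
  rw [this]
  exact measurableSet_sbtw3.preimage
    (measurable_const.prodMk (measurable_id.prodMk measurable_const))

lemma e_eq (a b c : Circle2pi) :
    eCocycle a b c =
      2 * Set.indicator {b' : Circle2pi | sbtw a b' c} (fun _ => (1:ℝ)) b - 1 := by
  unfold eCocycle
  by_cases h : sbtw a b c
  · simp [h, Set.indicator_apply]; norm_num
  · simp [h, Set.indicator_apply]

lemma measurable_e3 :
    Measurable (fun p : Circle2pi × Circle2pi × Circle2pi => eCocycle p.1 p.2.1 p.2.2) := by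
  have : (fun p : Circle2pi × Circle2pi × Circle2pi => eCocycle p.1 p.2.1 p.2.2) =
      fun p => 2 * Set.indicator
        {p : Circle2pi × Circle2pi × Circle2pi | sbtw p.1 p.2.1 p.2.2} (fun _ => (1:ℝ)) p - 1 := by
    funext p
    unfold eCocycle
    by_cases h : sbtw p.1 p.2.1 p.2.2
    · simp [h, Set.indicator_apply]; norm_num
    · simp [h, Set.indicator_apply]
  rw [this]
  exact ((measurable_const.mul ((measurable_const).indicator measurableSet_sbtw3)).sub
    measurable_const)

lemma abs_e_le (a b c : Circle2pi) : |eCocycle a b c| ≤ 1 := by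
  unfold eCocycle
  split <;> simp

end EulerAux
namespace EulerAux

/-! ### Integrability helpers -/

lemma bdd_integrable {α : Type*} [MeasurableSpace α] {μ : Measure α} [IsFiniteMeasure μ]
    {f : α → ℝ} (hm : AEStronglyMeasurable f μ) {C : ℝ} (h : ∀ x, |f x| ≤ C) :
    Integrable f μ :=
  Integrable.mono' (integrable_const C) hm (ae_of_all _ fun x => by simpa using h x)

lemma bdd_intervalIntegrable {f : ℝ → ℝ} (hm : Measurable f) {C : ℝ} (h : ∀ x, |f x| ≤ C)
    (a b : ℝ) : IntervalIntegrable f volume a b := by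
  rw [intervalIntegrable_iff]
  exact Integrable.mono' (integrableOn_const measure_Ioc_lt_top.ne)
    hm.aestronglyMeasurable.restrict (ae_of_all _ fun x => by simpa using h x)

/-! ### The arc integral -/

lemma arc_integral (g : Circle2pi → ℝ) (hgm : Measurable g) (hgb : ∀ θ, |g θ| ≤ 1)
    (H : Circle2pi → ℝ)
    (hH : ∀ a b : ℝ, ∫ x in a..b, g ((x : ℝ) : Circle2pi) =
      H ((b : ℝ) : Circle2pi) - H ((a : ℝ) : Circle2pi))
    (θ₀ θ₂ : Circle2pi) (hne : θ₀ ≠ θ₂) :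
    ∫ θ₁, Set.indicator {b : Circle2pi | sbtw θ₀ b θ₂} g θ₁ ∂circleMeasure =
      (2 * π)⁻¹ * (H θ₂ - H θ₀) := by
  have hp : (0 : ℝ) < 2 * π := Real.two_pi_pos
  obtain ⟨t₀, rfl⟩ := QuotientAddGroup.mk_surjective θ₀
  obtain ⟨t₂, rfl⟩ := QuotientAddGroup.mk_surjective θ₂
  set d : ℝ := toIocMod hp t₀ t₂ with hd_def
  have hd_coe : ((d : ℝ) : Circle2pi) = ((t₂ : ℝ) : Circle2pi) :=
    Real.Angle.coe_toIocMod t₂ t₀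
  have hd_mem := toIocMod_mem_Ioc hp t₀ t₂
  have hd1 : t₀ < d := hd_mem.1
  have hd2 : d ≤ t₀ + 2 * π := hd_mem.2
  have hdne : d ≠ t₀ + 2 * π := by
    intro h
    apply hne
    rw [← hd_coe, h]
    exact (AddCircle.coe_add_period (2 * π) t₀).symm
  have hd2' : d < t₀ + 2 * π := lt_of_le_of_ne hd2 hdne
  -- transfer to interval integral
  rw [haar_int _ t₀]
  -- the lifted integrand
  set f : ℝ → ℝ := fun x => Set.indicator {b : Circle2pi | sbtw ↑t₀ b ↑t₂} g ((x : ℝ) : Circle2pi)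
    with hf_def
  have hfm : Measurable f :=
    (hgm.indicator (measurableSet_sbtw_section _ _)).comp AddCircle.measurable_mk'
  have hfb : ∀ x, |f x| ≤ 1 := by
    intro x
    show |Set.indicator {b : Circle2pi | sbtw (↑t₀ : Circle2pi) b ↑t₂} g ((x : ℝ) : Circle2pi)| ≤ 1
    by_cases hmem : ((x : ℝ) : Circle2pi) ∈ {b : Circle2pi | sbtw (↑t₀ : Circle2pi) b ↑t₂}
    · rw [Set.indicator_of_mem hmem]; exact hgb _
    · rw [Set.indicator_of_notMem hmem]; simp
  -- split the interval at d
  have hsplit := intervalIntegral.integral_add_adjacent_intervals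
    (bdd_intervalIntegrable hfm hfb t₀ d) (bdd_intervalIntegrable hfm hfb d (t₀ + 2 * π))
  rw [← hsplit]
  -- first piece
  have h1 : ∫ x in t₀..d, f x = H ((t₂ : ℝ) : Circle2pi) - H ((t₀ : ℝ) : Circle2pi) := by
    have hae : ∀ᵐ x ∂(volume : Measure ℝ), x ∈ Set.uIoc t₀ d →
        f x = g ((x : ℝ) : Circle2pi) := by
      have hne_d : ∀ᵐ x ∂(volume : Measure ℝ), x ≠ d := by
        refine ae_iff.mpr ?_
        have : {x : ℝ | ¬x ≠ d} = {d} := by ext y; simp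
        rw [this]
        exact measure_singleton d
      filter_upwards [hne_d] with x hx hxmem
      rw [Set.uIoc_of_le hd1.le] at hxmem
      have hx1 : t₀ < x := hxmem.1
      have hx2 : x < d := lt_of_le_of_ne hxmem.2 hx
      have hsb : sbtw ((t₀ : ℝ) : Circle2pi) ((x : ℝ) : Circle2pi) ((t₂ : ℝ) : Circle2pi) := by
        rw [← hd_coe]
        exact (sbtw_coe_iff hd1 hd2' hx1 (by linarith)).mpr hx2
      have hmem : ((x : ℝ) : Circle2pi) ∈ {b : Circle2pi | sbtw (↑t₀ : Circle2pi) b ↑t₂} := hsb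
      show Set.indicator {b : Circle2pi | sbtw (↑t₀ : Circle2pi) b ↑t₂} g ((x : ℝ) : Circle2pi) = _
      exact Set.indicator_of_mem hmem g
    rw [intervalIntegral.integral_congr_ae hae, hH t₀ d]
    try rw [hd_coe]
  -- second piece
  have h2 : ∫ x in d..(t₀ + 2 * π), f x = 0 := by
    have heq : Set.EqOn f 0 (Set.uIcc d (t₀ + 2 * π)) := by
      intro x hx
      rw [Set.uIcc_of_le hd2] at hx
      have hx1 : t₀ < x := lt_of_lt_of_le hd1 hx.1
      have hnsb : ¬sbtw ((t₀ : ℝ) : Circle2pi) ((x : ℝ) : Circle2pi) ((t₂ : ℝ) : Circle2pi) := by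
        rw [← hd_coe]
        rw [sbtw_coe_iff hd1 hd2' hx1 hx.2]
        exact not_lt.mpr hx.1
      have hmem : ((x : ℝ) : Circle2pi) ∉ {b : Circle2pi | sbtw (↑t₀ : Circle2pi) b ↑t₂} := hnsb
      show Set.indicator {b : Circle2pi | sbtw (↑t₀ : Circle2pi) b ↑t₂} g ((x : ℝ) : Circle2pi) = _
      exact Set.indicator_of_notMem hmem g
    rw [intervalIntegral.integral_congr heq]
    exact intervalIntegral.integral_zero
  rw [h1, h2, add_zero]

/-! ### Inner integral over θ₁ against eCocycle -/

lemma inner_e_integral (g : Circle2pi → ℝ) (hgm : Measurable g) (hgb : ∀ θ, |g θ| ≤ 1)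
    (hgz : ∫ θ, g θ ∂circleMeasure = 0)
    (H : Circle2pi → ℝ)
    (hH : ∀ a b : ℝ, ∫ x in a..b, g ((x : ℝ) : Circle2pi) =
      H ((b : ℝ) : Circle2pi) - H ((a : ℝ) : Circle2pi))
    (θ₀ θ₂ : Circle2pi) (hne : θ₀ ≠ θ₂) :
    ∫ θ₁, eCocycle θ₀ θ₁ θ₂ * g θ₁ ∂circleMeasure = π⁻¹ * (H θ₂ - H θ₀) := by
  have hpt : (fun θ₁ => eCocycle θ₀ θ₁ θ₂ * g θ₁) =
      fun θ₁ => 2 * Set.indicator {b : Circle2pi | sbtw θ₀ b θ₂} g θ₁ - g θ₁ := by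
    funext θ₁
    unfold eCocycle
    by_cases h : sbtw θ₀ θ₁ θ₂ <;> simp [h, Set.indicator_apply] <;> ring
  rw [hpt]
  have hind : Integrable (fun θ₁ => Set.indicator {b : Circle2pi | sbtw θ₀ b θ₂} g θ₁)
      circleMeasure := by
    apply bdd_integrable (C := 1)
      ((hgm.indicator (measurableSet_sbtw_section _ _)).aestronglyMeasurable)
    intro x
    by_cases hmem : x ∈ {b : Circle2pi | sbtw θ₀ b θ₂}
    · rw [Set.indicator_of_mem hmem]; exact hgb _
    · rw [Set.indicator_of_notMem hmem]; simp
  have hgint : Integrable g circleMeasure := bdd_integrable hgm.aestronglyMeasurable hgb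
  rw [integral_sub (hind.const_mul 2) hgint, integral_const_mul,
    arc_integral g hgm hgb H hH θ₀ θ₂ hne, hgz, sub_zero]
  have : (2 : ℝ) * (2 * π)⁻¹ = π⁻¹ := by
    field_simp
  rw [← mul_assoc, this]

end EulerAux

namespace EulerAux

lemma abs_mul_le_one {a b : ℝ} (ha : |a| ≤ 1) (hb : |b| ≤ 1) : |a * b| ≤ 1 := by
  rw [abs_mul]
  nlinarith [abs_nonneg a, abs_nonneg b]

end EulerAux


/-- integrating `e` against three trigonometric functions gives zero. -/
theorem euler_three_trig_vanish (k₀ k₁ k₂ : ℤ) (h₀ : k₀ ≠ 0) (h₁ : k₁ ≠ 0) (h₂ : k₂ ≠ 0)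
    (γ₀ γ₁ γ₂ : Circle2pi → ℝ)
    (hγ₀ : γ₀ = Real.Angle.cos ∨ γ₀ = Real.Angle.sin)
    (hγ₁ : γ₁ = Real.Angle.cos ∨ γ₁ = Real.Angle.sin)
    (hγ₂ : γ₂ = Real.Angle.cos ∨ γ₂ = Real.Angle.sin) :
    ∫ p : Circle2pi × Circle2pi × Circle2pi,
        eCocycle p.1 p.2.1 p.2.2 * γ₀ (k₀ • p.1) * γ₁ (k₁ • p.2.1) * γ₂ (k₂ • p.2.2)
      ∂(circleMeasure.prod (circleMeasure.prod circleMeasure)) = 0 := by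
  obtain ⟨hc₀, hb₀⟩ := EulerAux.gamma_props k₀ γ₀ hγ₀
  obtain ⟨hc₁, hb₁⟩ := EulerAux.gamma_props k₁ γ₁ hγ₁
  obtain ⟨hc₂, hb₂⟩ := EulerAux.gamma_props k₂ γ₂ hγ₂
  obtain ⟨H, hHc, hHb, hH⟩ := EulerAux.exists_antideriv k₁ h₁ γ₁ hγ₁
  have hz₀ := EulerAux.trig_zero k₀ h₀ γ₀ hγ₀
  have hz₁ := EulerAux.trig_zero k₁ h₁ γ₁ hγ₁
  have hz₂ := EulerAux.trig_zero k₂ h₂ γ₂ hγ₂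
  set μ : Measure Circle2pi := circleMeasure with hμ
  set g₀ : Circle2pi → ℝ := fun θ => γ₀ (k₀ • θ) with hg₀
  set g₁ : Circle2pi → ℝ := fun θ => γ₁ (k₁ • θ) with hg₁
  set g₂ : Circle2pi → ℝ := fun θ => γ₂ (k₂ • θ) with hg₂
  set F : Circle2pi × Circle2pi × Circle2pi → ℝ :=
    fun p => eCocycle p.1 p.2.1 p.2.2 * g₀ p.1 * g₁ p.2.1 * g₂ p.2.2 with hF
  have hFm : Measurable F :=
    ((EulerAux.measurable_e3.mul (hc₀.measurable.comp measurable_fst)).mul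
      (hc₁.measurable.comp measurable_snd.fst)).mul
      (hc₂.measurable.comp measurable_snd.snd)
  have hFb : ∀ p, |F p| ≤ 1 := fun p =>
    EulerAux.abs_mul_le_one
      (EulerAux.abs_mul_le_one
        (EulerAux.abs_mul_le_one (EulerAux.abs_e_le _ _ _) (hb₀ _)) (hb₁ _)) (hb₂ _)
  have hFi : Integrable F (μ.prod (μ.prod μ)) :=
    EulerAux.bdd_integrable hFm.aestronglyMeasurable hFb
  show (∫ p, F p ∂(μ.prod (μ.prod μ))) = 0
  rw [MeasureTheory.integral_prod _ hFi]
  set C : ℝ := ∫ θ₂, g₂ θ₂ * H θ₂ ∂μ with hC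
  have key : ∀ θ₀, (∫ q, F (θ₀, q) ∂(μ.prod μ)) = (π⁻¹ * C) * g₀ θ₀ := by
    intro θ₀
    have hsec_m : Measurable (fun q : Circle2pi × Circle2pi => F (θ₀, q)) :=
      hFm.comp (measurable_const.prodMk measurable_id)
    have hsec_i : Integrable (fun q : Circle2pi × Circle2pi => F (θ₀, q)) (μ.prod μ) :=
      EulerAux.bdd_integrable hsec_m.aestronglyMeasurable (fun q => hFb (θ₀, q))
    rw [MeasureTheory.integral_prod_symm _ hsec_i]
    have inner1 : ∀ θ₂, θ₀ ≠ θ₂ → (∫ θ₁, F (θ₀, (θ₁, θ₂)) ∂μ) =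
        (g₀ θ₀ * g₂ θ₂) * (π⁻¹ * (H θ₂ - H θ₀)) := by
      intro θ₂ hne
      have hrw : (fun θ₁ => F (θ₀, (θ₁, θ₂))) =
          fun θ₁ => (g₀ θ₀ * g₂ θ₂) * (eCocycle θ₀ θ₁ θ₂ * g₁ θ₁) := by
        funext θ₁
        show eCocycle θ₀ θ₁ θ₂ * g₀ θ₀ * g₁ θ₁ * g₂ θ₂ = _
        ring
      rw [hrw, integral_const_mul,
        EulerAux.inner_e_integral g₁ hc₁.measurable hb₁ hz₁ H hH θ₀ θ₂ hne]
    have hae : ∀ᵐ θ₂ ∂μ, (∫ θ₁, F (θ₀, (θ₁, θ₂)) ∂μ) =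
        (g₀ θ₀ * g₂ θ₂) * (π⁻¹ * (H θ₂ - H θ₀)) := by
      have hne : ∀ᵐ θ₂ ∂μ, θ₂ ≠ θ₀ := by
        refine ae_iff.mpr ?_
        have hset : {θ₂ : Circle2pi | ¬θ₂ ≠ θ₀} = {θ₀} := by ext y; simp
        rw [hset]
        exact EulerAux.haar_singleton θ₀
      filter_upwards [hne] with θ₂ h using inner1 θ₂ (Ne.symm h)
    rw [integral_congr_ae hae]
    have hrw2 : (fun θ₂ => (g₀ θ₀ * g₂ θ₂) * (π⁻¹ * (H θ₂ - H θ₀))) =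
        fun θ₂ => (g₀ θ₀ * π⁻¹) * (g₂ θ₂ * H θ₂) - (g₀ θ₀ * π⁻¹ * H θ₀) * g₂ θ₂ := by
      funext θ₂; ring
    rw [hrw2]
    have hi1 : Integrable (fun θ₂ => g₂ θ₂ * H θ₂) μ :=
      EulerAux.bdd_integrable (hc₂.mul hHc).measurable.aestronglyMeasurable
        (fun θ => EulerAux.abs_mul_le_one (hb₂ θ) (hHb θ))
    have hi2 : Integrable (fun θ₂ => g₂ θ₂) μ :=
      EulerAux.bdd_integrable hc₂.measurable.aestronglyMeasurable hb₂
    rw [integral_sub (hi1.const_mul _) (hi2.const_mul _), integral_const_mul, integral_const_mul,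
      ← hC, hz₂, mul_zero, sub_zero]
    ring
  simp only [key]
  rw [integral_const_mul, hz₀, mul_zero]
end
end
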